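/- arXiv:1701.06208 — 3 statements merged into one kernel-verified Lean document; each statement's English description precedes it below -/
import Mathlib

section
/- Let H be a connected graph with n vertices and m edges. Then the number of spanning trees of H is at most (1/n)·(2m/(n-1))^{n-1}. -/
open Finset Matrix Equiv Equiv.Perm

namespace GrimmettAux

variable {ι C R : Type*} [Fintype ι] [DecidableEq ι] [CommRing R]

theorem sum_perm_zero_of_not_inj [Fintype C] (M : Matrix ι C R) (N : Matrix C ι R) {p : ι → C}
    (H : ¬Function.Injective p) :
    (∑ σ : Perm ι, ((sign σ : ℤ) : R) * ∏ x, M (σ x) (p x) * N (p x) x) = 0 := by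
  obtain ⟨i, j, hpij, hij⟩ : ∃ i j, p i = p j ∧ i ≠ j := by
    rw [Function.Injective] at H
    push_neg at H
    exact H
  exact
    sum_involution (fun σ _ => σ * Equiv.swap i j)
      (fun σ _ => by
        have : (∏ x, M (σ x) (p x)) = ∏ x, M ((σ * Equiv.swap i j) x) (p x) :=
          Fintype.prod_equiv (swap i j) _ _ (by simp [apply_swap_eq_self hpij])
        simp [this, sign_swap hij, -sign_swap', prod_mul_distrib])
      (fun σ _ _ => (not_congr mul_swap_eq_iff).mpr hij) (fun _ _ => mem_univ _) fun σ _ =>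
      mul_swap_involutive i j σ

theorem sum_perm_sum_perm (M N : Matrix ι ι R) :
    (∑ τ : Perm ι, ∑ σ : Perm ι, ((sign σ : ℤ) : R) * ∏ i, M (σ i) (τ i) * N (τ i) i)
      = det M * det N :=
  calc
    (∑ τ : Perm ι, ∑ σ : Perm ι, ((sign σ : ℤ) : R) * ∏ i, M (σ i) (τ i) * N (τ i) i)
    _ = ∑ σ : Perm ι, ∑ τ : Perm ι,
        (∏ i, N (σ i) i) * ((sign τ : ℤ) : R) * ∏ j, M (τ j) (σ j) := by
      simp only [mul_comm, mul_left_comm, prod_mul_distrib, mul_assoc]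
    _ = ∑ σ : Perm ι, ∑ τ : Perm ι,
        (∏ i, N (σ i) i) * (((sign σ : ℤ) : R) * ((sign τ : ℤ) : R)) * ∏ i, M (τ i) i :=
      (sum_congr rfl fun σ _ =>
        Fintype.sum_equiv (Equiv.mulRight σ⁻¹) _ _ fun τ => by
          have : (∏ j, M (τ j) (σ j)) = ∏ j, M ((τ * σ⁻¹) j) j := by
            rw [← (σ⁻¹ : _ ≃ _).prod_comp]
            simp only [Equiv.Perm.coe_mul, Equiv.Perm.inv_def, Equiv.apply_symm_apply, Function.comp_apply]
          have h : ((sign σ : ℤ) : R) * ((sign (τ * σ⁻¹) : ℤ) : R) = ((sign τ : ℤ) : R) :=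
            calc
              ((sign σ : ℤ) : R) * ((sign (τ * σ⁻¹) : ℤ) : R)
                  = ((sign (τ * σ⁻¹ * σ) : ℤ) : R) := by
                rw [mul_comm, sign_mul (τ * σ⁻¹)]
                simp only [Int.cast_mul, Units.val_mul]
              _ = ((sign τ : ℤ) : R) := by simp only [inv_mul_cancel_right]
          simp_rw [Equiv.coe_mulRight, h]
          simp only [this])
    _ = det M * det N := by
      simp only [det_apply', Finset.mul_sum, mul_comm, mul_left_comm, mul_assoc]

end GrimmettAux

namespace GrimmettAux

variable {ι C R : Type*} [Fintype ι] [DecidableEq ι] [CommRing R]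

theorem det_mul_transpose_self [Fintype C] [DecidableEq C] (A : Matrix ι C R)
    (sel : Finset C → ι → C)
    (hinj : ∀ S : Finset C, S.card = Fintype.card ι → Function.Injective (sel S))
    (him : ∀ S : Finset C, S.card = Fintype.card ι → Finset.image (sel S) univ = S) :
    det (A * Aᵀ) = ∑ S ∈ univ.powersetCard (Fintype.card ι),
      det (A.submatrix id (sel S)) ^ 2 := by
  have key : ∀ (S : Finset C), S.card = Fintype.card ι →
      ∑ p ∈ (univ.filter fun p : ι → C => Function.Injective p).filter
          (fun p => Finset.image p univ = S),
        (∑ σ : Perm ι, ((sign σ : ℤ) : R) * ∏ x, A (σ x) (p x) * Aᵀ (p x) x)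
      = det (A.submatrix id (sel S)) ^ 2 := by
    intro S hS
    set g := sel S with hg
    have hginj : Function.Injective g := hinj S hS
    have hgim : Finset.image g univ = S := him S hS
    have hgmem : ∀ i, g i ∈ S := fun i => hgim ▸ mem_image_of_mem g (mem_univ i)
    have hcard : Fintype.card ι = Fintype.card S := by
      rw [Fintype.card_coe, hS]
    have gbij : Function.Bijective (fun i => (⟨g i, hgmem i⟩ : S)) := by
      rw [Fintype.bijective_iff_injective_and_card]
      exact ⟨fun a b hab => hginj (congrArg Subtype.val hab), hcard⟩
    set gE : ι ≃ S := Equiv.ofBijective _ gbij with hgE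
    have hfib : (univ.filter fun p : ι → C => Function.Injective p).filter
          (fun p => Finset.image p univ = S)
        = Finset.image (fun π : Perm ι => g ∘ π) univ := by
      ext p
      simp only [mem_filter, mem_univ, true_and, Finset.mem_image]
      constructor
      · rintro ⟨hpinj, hpim⟩
        have pbij : Function.Bijective
            (fun i => (⟨p i, hpim ▸ mem_image_of_mem p (mem_univ i)⟩ : S)) := by
          rw [Fintype.bijective_iff_injective_and_card]
          exact ⟨fun a b hab => hpinj (congrArg Subtype.val hab), hcard⟩
        set pE : ι ≃ S := Equiv.ofBijective _ pbij with hpE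
        refine ⟨pE.trans gE.symm, ?_⟩
        funext x
        exact congrArg Subtype.val (gE.apply_symm_apply (pE x))
      · rintro ⟨π, rfl⟩
        refine ⟨hginj.comp π.injective, ?_⟩
        rw [← Finset.image_image, image_univ_equiv, hgim]
    have hinj2 : ∀ π ∈ (univ : Finset (Perm ι)), ∀ π' ∈ (univ : Finset (Perm ι)),
        g ∘ ⇑π = g ∘ ⇑π' → π = π' :=
      fun π _ π' _ h => Equiv.ext fun x => hginj (show g (π x) = g (π' x) from congrFun h x)
    rw [hfib, Finset.sum_image hinj2]
    have := sum_perm_sum_perm (A.submatrix id g) (A.submatrix id g)ᵀ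
    rw [det_transpose, ← sq] at this
    rw [← this]
    rfl
  calc
    det (A * Aᵀ)
    _ = ∑ p : ι → C, ∑ σ : Perm ι, ((sign σ : ℤ) : R) * ∏ i, A (σ i) (p i) * Aᵀ (p i) i := by
      simp only [det_apply', Matrix.mul_apply, prod_univ_sum, mul_sum, Fintype.piFinset_univ]
      rw [Finset.sum_comm]
    _ = ∑ p ∈ univ.filter (fun p : ι → C => Function.Injective p),
        ∑ σ : Perm ι, ((sign σ : ℤ) : R) * ∏ i, A (σ i) (p i) * Aᵀ (p i) i := by
      refine (sum_subset (filter_subset _ _) fun f _ hf => ?_).symm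
      refine sum_perm_zero_of_not_inj A Aᵀ ?_
      simpa using hf
    _ = ∑ S ∈ univ.powersetCard (Fintype.card ι),
        ∑ p ∈ (univ.filter fun p : ι → C => Function.Injective p).filter
          (fun p => Finset.image p univ = S),
        ∑ σ : Perm ι, ((sign σ : ℤ) : R) * ∏ i, A (σ i) (p i) * Aᵀ (p i) i := by
      refine (Finset.sum_fiberwise_of_maps_to ?_ _).symm
      intro p hp
      simp only [mem_filter, mem_univ, true_and] at hp
      rw [mem_powersetCard_univ, card_image_of_injective _ hp, card_univ]
    _ = ∑ S ∈ univ.powersetCard (Fintype.card ι), det (A.submatrix id (sel S)) ^ 2 := by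
      refine sum_congr rfl fun S hS => key S ?_
      exact (mem_powersetCard_univ.mp hS)

end GrimmettAux

open Finset Matrix SimpleGraph

namespace GrimmettAux2

variable {V : Type*} [Fintype V] [DecidableEq V]

set_option linter.unusedSectionVars false

/-- Signed incidence matrix over `ℤ`, with zero columns at non-edges. -/
noncomputable def inc (H : SimpleGraph V) [DecidableRel H.Adj] : Matrix V (Sym2 V) ℤ :=
  fun v e => if e ∈ H.edgeFinset then
    (if v = (Quot.out e).1 then 1 else if v = (Quot.out e).2 then -1 else 0) else 0

lemma out_mk (e : Sym2 V) : s((Quot.out e).1, (Quot.out e).2) = e := by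
  show Quot.mk _ ((Quot.out e).1, (Quot.out e).2) = e
  rw [Prod.mk.eta]
  exact Quot.out_eq e

lemma out_ne {H : SimpleGraph V} {e : Sym2 V} (he : e ∈ H.edgeSet) :
    (Quot.out e).1 ≠ (Quot.out e).2 := by
  intro h
  have hd := H.not_isDiag_of_mem_edgeSet he
  rw [← out_mk e] at hd
  exact hd (Sym2.mk_isDiag_iff.mpr h)

lemma sum_ite_pair {a b : V} (hab : a ≠ b) (x : V → ℝ) :
    ∑ v, (if v = a then (1:ℝ) else if v = b then -1 else 0) * x v = x a - x b := by
  have key : ∀ v, (if v = a then (1:ℝ) else if v = b then -1 else 0) * x v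
      = (if v = a then x v else 0) - (if v = b then x v else 0) := by
    intro v
    by_cases h1 : v = a
    · rw [if_pos h1, if_pos h1, if_neg (fun h2 => hab (h1.symm.trans h2)), one_mul, sub_zero]
    · by_cases h2 : v = b
      · rw [if_neg h1, if_pos h2, if_neg h1, if_pos h2]
        ring
      · rw [if_neg h1, if_neg h2, if_neg h1, if_neg h2]
        ring
  rw [Finset.sum_congr rfl (fun v _ => key v), Finset.sum_sub_distrib,
    Finset.sum_ite_eq' univ a x, Finset.sum_ite_eq' univ b x]
  simp

variable (H : SimpleGraph V) [DecidableRel H.Adj]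

lemma inc_cast (v : V) {e : Sym2 V} (he : e ∈ H.edgeFinset) :
    ((inc H v e : ℤ) : ℝ)
      = (if v = (Quot.out e).1 then (1:ℝ) else if v = (Quot.out e).2 then -1 else 0) := by
  rw [inc, if_pos he]
  by_cases h1 : v = (Quot.out e).1
  · simp [h1]
  · by_cases h2 : v = (Quot.out e).2 <;> simp [h1, h2]

lemma inc_col_dot {e : Sym2 V} (he : e ∈ H.edgeFinset) (x : V → ℝ) :
    ∑ v, ((inc H v e : ℤ) : ℝ) * x v = x (Quot.out e).1 - x (Quot.out e).2 := by
  rw [Finset.sum_congr rfl (fun v _ => by rw [inc_cast H v he])]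
  exact sum_ite_pair (out_ne (mem_edgeFinset.mp he)) x

lemma inc_col_sum (e : Sym2 V) : ∑ v, ((inc H v e : ℤ) : ℝ) = 0 := by
  by_cases he : e ∈ H.edgeFinset
  · have := inc_col_dot H he (fun _ => (1:ℝ))
    simpa using this
  · simp [inc, he]

lemma inc_col_sq (e : Sym2 V) :
    ∑ v, ((inc H v e : ℤ) : ℝ) ^ 2 = if e ∈ H.edgeFinset then 2 else 0 := by
  by_cases he : e ∈ H.edgeFinset
  · rw [if_pos he]
    have hab := out_ne (H := H) (mem_edgeFinset.mp he)
    have key : ∀ v, ((inc H v e : ℤ) : ℝ) ^ 2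
        = (if v = (Quot.out e).1 then (1:ℝ) else 0) + (if v = (Quot.out e).2 then 1 else 0) := by
      intro v
      rw [inc_cast H v he]
      by_cases h1 : v = (Quot.out e).1
      · rw [if_pos h1, if_pos h1, if_neg (fun h2 => hab (h1.symm.trans h2))]
        norm_num
      · by_cases h2 : v = (Quot.out e).2
        · rw [if_neg h1, if_pos h2, if_neg h1, if_pos h2]
          norm_num
        · rw [if_neg h1, if_neg h2, if_neg h1, if_neg h2]
          norm_num
    rw [Finset.sum_congr rfl (fun v _ => key v), Finset.sum_add_distrib]
    simp [Finset.sum_ite_eq']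
    norm_num
  · rw [if_neg he]
    simp [inc, he]

lemma walk_constant {G : SimpleGraph V} (hG : G.Preconnected) {x : V → ℝ}
    (h : ∀ a b, G.Adj a b → x a = x b) (u v : V) : x u = x v := by
  obtain ⟨w⟩ := hG u v
  induction w with
  | nil => rfl
  | cons hadj _ ih => exact (h _ _ hadj).trans ih



noncomputable def Bmat (H : SimpleGraph V) [DecidableRel H.Adj] (t : ℝ) :
    Matrix V (Sym2 V ⊕ V) ℝ :=
  fun v c => Sum.elim (fun e => ((inc H v e : ℤ) : ℝ))
    (fun r => if v = r then Real.sqrt t else 0) c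

lemma tree_card (H : SimpleGraph V) [DecidableRel H.Adj] {s : Finset (Sym2 V)}
    (hs : (↑s : Set (Sym2 V)) ⊆ H.edgeSet)
    (htree : (fromEdgeSet (↑s : Set (Sym2 V))).IsTree) : s.card + 1 = Fintype.card V := by
  classical
  have hES : (fromEdgeSet (↑s : Set (Sym2 V))).edgeSet = ↑s := by
    rw [SimpleGraph.edgeSet_fromEdgeSet]
    apply _root_.sdiff_eq_self_iff_disjoint.mpr
    rw [Set.disjoint_left]
    intro e he hes
    exact absurd he (H.not_isDiag_of_mem_edgeSet (hs hes))
  letI : Fintype ((fromEdgeSet (↑s : Set (Sym2 V))).edgeSet) := Fintype.ofFinite _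
  have hEF : (fromEdgeSet (↑s : Set (Sym2 V))).edgeFinset = s := by
    ext e
    rw [SimpleGraph.mem_edgeFinset, hES]
    exact Finset.mem_coe
  have h := htree.card_edgeFinset
  rwa [hEF] at h


lemma det_sq_ge (H : SimpleGraph V) [DecidableRel H.Adj] {t : ℝ} (ht : 0 < t)
    {s : Finset (Sym2 V)} (hs : (↑s : Set (Sym2 V)) ⊆ H.edgeSet)
    (htree : (fromEdgeSet (↑s : Set (Sym2 V))).IsTree)
    (r : V) {g : V → Sym2 V ⊕ V} (hginj : Function.Injective g)
    (hgim : Finset.image g univ = s.image Sum.inl ∪ {Sum.inr r}) :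
    t ≤ det ((Bmat H t).submatrix id g) ^ 2 := by
  classical
  have hgmem : ∀ c ∈ s.image Sum.inl ∪ ({Sum.inr r} : Finset (Sym2 V ⊕ V)),
      ∃ j, g j = c := by
    intro c hc
    rw [← hgim] at hc
    simpa using hc
  set M₀ : Matrix V V ℤ := Matrix.of fun v j =>
    Sum.elim (fun e => inc H v e) (fun r' => if v = r' then 1 else 0) (g j) with hM₀
  set d : V → ℝ := fun j => Sum.elim (fun _ => (1:ℝ)) (fun _ => Real.sqrt t) (g j) with hd
  have hfact : (Bmat H t).submatrix id g
      = (M₀.map (fun z : ℤ => (z:ℝ))) * Matrix.diagonal d := by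
    ext v j
    rw [Matrix.mul_diagonal]
    cases hgj : g j with
    | inl e =>
      simp [Bmat, Matrix.submatrix_apply, hgj, hM₀, hd, Matrix.map_apply]
    | inr r' =>
      simp only [Matrix.submatrix_apply, id_eq, Bmat, hgj, Sum.elim_inr, Matrix.map_apply,
        Matrix.of_apply, hM₀, hd]
      by_cases hv : v = r' <;> simp [hv]
  have hdprod : ∏ j, d j = Real.sqrt t := by
    have h1 : ∏ j, d j
        = ∏ c ∈ Finset.image g univ, Sum.elim (fun _ => (1:ℝ)) (fun _ => Real.sqrt t) c := by
      rw [Finset.prod_image (fun a _ b _ h => hginj h)]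
    rw [h1, hgim, Finset.prod_union, Finset.prod_image (fun a _ b _ h => Sum.inl_injective h)]
    · simp
    · rw [Finset.disjoint_left]
      intro c hc1 hc2
      rw [Finset.mem_image] at hc1
      obtain ⟨e, _, rfl⟩ := hc1
      simp at hc2
  -- the integer determinant is nonzero
  have hdet_ne : (M₀.map (fun z : ℤ => (z:ℝ))).det ≠ 0 := by
    rw [← Matrix.det_transpose]
    intro h0
    obtain ⟨x, hx0, hxv⟩ := (Matrix.exists_mulVec_eq_zero_iff).mpr h0
    have hcol : ∀ j, ∑ v, ((M₀ v j : ℤ) : ℝ) * x v = 0 := by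
      intro j
      have h := congrFun hxv j
      simpa [Matrix.mulVec, dotProduct, Matrix.transpose_apply, Matrix.map_apply]
        using h
    have hedge : ∀ e ∈ s, x (Quot.out e).1 = x (Quot.out e).2 := by
      intro e he
      obtain ⟨j, hj⟩ := hgmem (Sum.inl e)
        (Finset.mem_union_left _ (Finset.mem_image_of_mem _ he))
      have h := hcol j
      have hMj : ∀ v, M₀ v j = inc H v e := by
        intro v
        rw [hM₀]
        simp [hj]
      rw [Finset.sum_congr rfl (fun v _ => by rw [hMj v])] at h
      have heF : e ∈ H.edgeFinset := mem_edgeFinset.mpr (hs he)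
      rw [inc_col_dot H heF] at h
      linarith [h]
    have hr : x r = 0 := by
      obtain ⟨j, hj⟩ := hgmem (Sum.inr r) (Finset.mem_union_right _ (Finset.mem_singleton_self _))
      have h := hcol j
      have hMj : ∀ v, M₀ v j = if v = r then 1 else 0 := by
        intro v
        rw [hM₀]
        simp [hj]
      rw [Finset.sum_congr rfl (fun v _ => by rw [hMj v])] at h
      have : ∑ v, (((if v = r then (1:ℤ) else 0) : ℤ) : ℝ) * x v
          = ∑ v, (if v = r then x v else 0) := by
        refine Finset.sum_congr rfl fun v _ => ?_
        by_cases hv : v = r <;> simp [hv]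
      rw [this, Finset.sum_ite_eq' univ r x, if_pos (Finset.mem_univ r)] at h
      exact h
    have hadj : ∀ a b, (fromEdgeSet (↑s : Set (Sym2 V))).Adj a b → x a = x b := by
      intro a b hab
      rw [SimpleGraph.fromEdgeSet_adj] at hab
      obtain ⟨hmem, hne⟩ := hab
      have h1 := hedge _ hmem
      have h2 : s((Quot.out s(a,b)).1, (Quot.out s(a,b)).2) = s(a,b) := out_mk _
      rw [Sym2.eq_iff] at h2
      rcases h2 with ⟨ha, hb⟩ | ⟨ha, hb⟩
      · rwa [ha, hb] at h1
      · rw [ha, hb] at h1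
        exact h1.symm
    have hconst := walk_constant htree.isConnected.preconnected hadj
    exact hx0 (funext fun v => (hconst v r).trans hr)
  have hMdet : M₀.det ≠ 0 := by
    intro h0
    apply hdet_ne
    have hcast : (M₀.map (fun z : ℤ => (z:ℝ))).det = ((M₀.det : ℤ) : ℝ) :=
      (RingHom.map_det (Int.castRingHom ℝ) M₀).symm
    rw [hcast, h0, Int.cast_zero]
  have hge1 : (1:ℤ) ≤ M₀.det ^ 2 := by
    have h1 := Int.one_le_abs (by simpa using hMdet)
    nlinarith [sq_abs M₀.det]
  have hge1R : (1:ℝ) ≤ ((M₀.det : ℤ) : ℝ)^2 := by exact_mod_cast hge1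
  have hcast : (M₀.map (fun z : ℤ => (z:ℝ))).det = ((M₀.det : ℤ) : ℝ) :=
    (RingHom.map_det (Int.castRingHom ℝ) M₀).symm
  rw [hfact, det_mul, det_diagonal, hdprod, hcast]
  have hsq : ((((M₀.det : ℤ) : ℝ)) * Real.sqrt t)^2 = ((M₀.det : ℤ) : ℝ)^2 * t := by
    rw [mul_pow, Real.sq_sqrt ht.le]
  rw [hsq]
  nlinarith [hge1R, ht]

end GrimmettAux2

open Finset Matrix

namespace GrimmettAux3

lemma prod_le_pow_card_avg {ι : Type*} (s : Finset ι) (f : ι → ℝ) (h0 : ∀ i ∈ s, 0 ≤ f i) :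
    ∏ i ∈ s, f i ≤ ((∑ i ∈ s, f i) / s.card) ^ s.card := by
  rcases s.eq_empty_or_nonempty with rfl | hne
  · simp
  · have hk : (0:ℝ) < (s.card : ℝ) := by
      exact_mod_cast Finset.card_pos.mpr hne
    have hw : ∑ _i ∈ s, (1 / (s.card:ℝ)) = 1 := by
      rw [Finset.sum_const, nsmul_eq_mul]
      field_simp
    have hgm := Real.geom_mean_le_arith_mean_weighted s (fun _ => 1/(s.card:ℝ)) f
      (fun i _ => by positivity) hw h0
    rw [Real.finset_prod_rpow s f h0] at hgm
    have hsum : ∑ i ∈ s, 1/(s.card:ℝ) * f i = (∑ i ∈ s, f i) / s.card := by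
      rw [← Finset.mul_sum]
      ring
    rw [hsum] at hgm
    have hprod0 : 0 ≤ ∏ i ∈ s, f i := Finset.prod_nonneg h0
    calc ∏ i ∈ s, f i = ((∏ i ∈ s, f i) ^ ((1:ℝ)/(s.card:ℝ))) ^ (s.card : ℕ) := by
          rw [← Real.rpow_natCast ((∏ i ∈ s, f i) ^ ((1:ℝ)/(s.card:ℝ))) s.card,
            ← Real.rpow_mul hprod0, one_div, inv_mul_cancel₀ hk.ne', Real.rpow_one]
      _ ≤ ((∑ i ∈ s, f i) / s.card) ^ s.card :=
          pow_le_pow_left₀ (Real.rpow_nonneg hprod0 _) hgm _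

variable {n' : Type*} [Fintype n'] [DecidableEq n']

lemma det_add_smul_one {A : Matrix n' n' ℝ} (hA : A.IsHermitian) (t : ℝ) :
    det (A + t • 1) = ∏ i, (hA.eigenvalues i + t) := by
  set U := (Matrix.IsHermitian.eigenvectorUnitary hA : Matrix n' n' ℝ) with hU
  have hU1 : U * star U = 1 :=
    (Matrix.mem_unitaryGroup_iff).mp (Matrix.IsHermitian.eigenvectorUnitary hA).2
  have hU1' : star U * U = 1 :=
    (Matrix.mem_unitaryGroup_iff').mp (Matrix.IsHermitian.eigenvectorUnitary hA).2
  have hdiag : Matrix.diagonal ((RCLike.ofReal ∘ hA.eigenvalues) : n' → ℝ)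
      = Matrix.diagonal hA.eigenvalues := by
    rw [RCLike.ofReal_real_eq_id, Function.id_comp]
  have hshift : A + t • 1 = U * (Matrix.diagonal hA.eigenvalues + t • 1) * star U := by
    conv_lhs => rw [hA.spectral_theorem, hdiag]
    rw [mul_add, add_mul]
    congr 1
    rw [Matrix.mul_smul, mul_one, Matrix.smul_mul, hU1]
  have hdd : Matrix.diagonal hA.eigenvalues + t • 1
      = Matrix.diagonal (fun i => hA.eigenvalues i + t) := by
    ext i j
    by_cases h : i = j
    · subst h; simp [Matrix.diagonal, Matrix.one_apply]
    · simp [Matrix.diagonal_apply_ne _ h, Matrix.one_apply_ne h]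
  rw [hshift, hdd, det_mul, det_mul, mul_comm, ← mul_assoc, ← det_mul, hU1', det_one, one_mul,
    det_diagonal]

lemma sum_eigenvalues_eq_trace {A : Matrix n' n' ℝ} (hA : A.IsHermitian) :
    ∑ i, hA.eigenvalues i = Matrix.trace A := by
  set U := (Matrix.IsHermitian.eigenvectorUnitary hA : Matrix n' n' ℝ) with hU
  have hU1' : star U * U = 1 :=
    (Matrix.mem_unitaryGroup_iff').mp (Matrix.IsHermitian.eigenvectorUnitary hA).2
  have hdiag : Matrix.diagonal ((RCLike.ofReal ∘ hA.eigenvalues) : n' → ℝ)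
      = Matrix.diagonal hA.eigenvalues := by
    rw [RCLike.ofReal_real_eq_id, Function.id_comp]
  have hU1'' : star (hA.eigenvectorUnitary : Matrix n' n' ℝ)
      * (hA.eigenvectorUnitary : Matrix n' n' ℝ) = 1 := hU1'
  conv_rhs => rw [hA.spectral_theorem, hdiag, Unitary.conjStarAlgAut_apply]
  rw [Matrix.trace_mul_cycle, hU1'', one_mul, Matrix.trace_diagonal]

end GrimmettAux3

/-- A spanning tree of a graph `G` on a finite vertex type `V`, encoded by its edge set. -/
def spanningTrees {V : Type*} [Fintype V] (G : SimpleGraph V) : Set (Finset (Sym2 V)) :=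
  {s | (s : Set (Sym2 V)) ⊆ G.edgeSet ∧ (SimpleGraph.fromEdgeSet (s : Set (Sym2 V))).IsTree}

set_option maxHeartbeats 1000000 in
/-- Grimmett's bound. A connected graph `H` with `n` vertices and `m` edges
has at most `(1/n)·(2m/(n-1))^(n-1)` spanning trees. -/
theorem card_spanningTrees_le {V : Type*} [Fintype V] (H : SimpleGraph V)
    [DecidableRel H.Adj] (hH : H.Connected) (n m : ℕ) (hn : n = Fintype.card V)
    (hm : m = H.edgeFinset.card) :
    ((spanningTrees H).ncard : ℝ) ≤ (1 / (n : ℝ)) * (2 * (m : ℝ) / ((n : ℝ) - 1)) ^ (n - 1) := by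
  classical
  obtain ⟨v0⟩ := hH.nonempty
  haveI : Nonempty V := ⟨v0⟩
  have hn1 : 1 ≤ n := by rw [hn]; exact Fintype.card_pos
  have hn0 : (0:ℝ) < (n:ℝ) := by exact_mod_cast hn1
  -- the finset of spanning trees
  set T : Finset (Finset (Sym2 V)) :=
    univ.filter (fun s => (↑s : Set (Sym2 V)) ⊆ H.edgeSet
      ∧ (SimpleGraph.fromEdgeSet (↑s : Set (Sym2 V))).IsTree) with hT
  have hτ : (spanningTrees H).ncard = T.card := by
    have h : spanningTrees H = ↑T := by
      ext s
      simp [spanningTrees, hT]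
    rw [h, Set.ncard_coe_finset]
  set τ := T.card with hτdef
  -- matrices
  set N : Matrix V (Sym2 V) ℝ := (GrimmettAux2.inc H).map (fun z : ℤ => (z:ℝ)) with hN
  set L : Matrix V V ℝ := N * Nᵀ with hL
  have hTrans : Nᵀ = Nᴴ := (Matrix.conjTranspose_eq_transpose_of_trivial N).symm
  have hHerm : L.IsHermitian := by
    rw [hL, hTrans]
    exact Matrix.isHermitian_mul_conjTranspose_self N
  have hPSD : L.PosSemidef := by
    rw [hL, hTrans]
    exact Matrix.posSemidef_self_mul_conjTranspose N
  have hNapp : ∀ v e, N v e = ((GrimmettAux2.inc H v e : ℤ):ℝ) := by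
    intro v e
    rw [hN, Matrix.map_apply]
  set μ := hHerm.eigenvalues with hμ
  have hμ0 : ∀ i, 0 ≤ μ i := fun i => hPSD.eigenvalues_nonneg i
  have htrace : L.trace = 2 * (m:ℝ) := by
    have h1 : L.trace = ∑ v, ∑ e, ((GrimmettAux2.inc H v e : ℤ):ℝ)^2 := by
      rw [hL, Matrix.trace]
      refine Finset.sum_congr rfl fun v _ => ?_
      rw [Matrix.diag_apply, Matrix.mul_apply]
      refine Finset.sum_congr rfl fun e _ => ?_
      rw [Matrix.transpose_apply, sq, hNapp]
    rw [h1, Finset.sum_comm, Finset.sum_congr rfl (fun e _ => GrimmettAux2.inc_col_sq H e),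
      Finset.sum_ite_mem, Finset.univ_inter, Finset.sum_const, nsmul_eq_mul, hm]
    ring
  have hμsum : ∑ i, μ i = 2 * (m:ℝ) := by
    rw [hμ, GrimmettAux3.sum_eigenvalues_eq_trace hHerm, htrace]
  have hdet0 : L.det = 0 := by
    rw [← Matrix.exists_mulVec_eq_zero_iff]
    refine ⟨fun _ => 1, fun hc => one_ne_zero (congrFun hc v0), ?_⟩
    rw [hL, ← Matrix.mulVec_mulVec]
    have hz : Nᵀ *ᵥ (fun _ => (1:ℝ)) = 0 := by
      funext e
      have h : (Nᵀ *ᵥ (fun _ => (1:ℝ))) e = ∑ v, Nᵀ e v * 1 := rfl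
      rw [h, Finset.sum_congr rfl (fun v _ => by rw [Matrix.transpose_apply, hNapp, mul_one]),
        GrimmettAux2.inc_col_sum H e]
      rfl
    rw [hz, Matrix.mulVec_zero]
  have hμprod : ∏ i, μ i = 0 := by
    have h := hHerm.det_eq_prod_eigenvalues
    rw [hdet0] at h
    simpa using h.symm
  obtain ⟨j0, -, hj0⟩ := Finset.prod_eq_zero_iff.mp hμprod
  -- main inequality for t > 0
  have hmain : ∀ t : ℝ, 0 < t → (τ : ℝ) * n ≤ ∏ i ∈ univ.erase j0, (μ i + t) := by
    intro t ht
    have hBB : GrimmettAux2.Bmat H t * (GrimmettAux2.Bmat H t)ᵀ = L + t • 1 := by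
      ext u v
      rw [Matrix.mul_apply, Fintype.sum_sum_type]
      have h1 : ∑ e : Sym2 V, GrimmettAux2.Bmat H t u (Sum.inl e)
          * (GrimmettAux2.Bmat H t)ᵀ (Sum.inl e) v = L u v := by
        rw [hL, Matrix.mul_apply]
        refine Finset.sum_congr rfl fun e _ => ?_
        rw [Matrix.transpose_apply, Matrix.transpose_apply, hNapp u e, hNapp v e]
        simp only [GrimmettAux2.Bmat, Sum.elim_inl, Matrix.of_apply]
      have h2 : ∑ r : V, GrimmettAux2.Bmat H t u (Sum.inr r)
          * (GrimmettAux2.Bmat H t)ᵀ (Sum.inr r) v = if u = v then t else 0 := by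
        have hterm : ∀ r, GrimmettAux2.Bmat H t u (Sum.inr r)
            * (GrimmettAux2.Bmat H t)ᵀ (Sum.inr r) v
            = if u = r then (if v = r then Real.sqrt t * Real.sqrt t else 0) else 0 := by
          intro r
          rw [Matrix.transpose_apply]
          simp only [GrimmettAux2.Bmat, Sum.elim_inr]
          by_cases hu : u = r <;> by_cases hv : v = r <;> simp [hu, hv]
        rw [Finset.sum_congr rfl (fun r _ => hterm r), Finset.sum_ite_eq univ u _,
          if_pos (Finset.mem_univ u)]
        by_cases huv : u = v
        · rw [if_pos (huv ▸ rfl : v = u), if_pos huv, Real.mul_self_sqrt ht.le]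
        · rw [if_neg (fun h => huv (h.symm)), if_neg huv]
      rw [h1, h2, Matrix.add_apply, Matrix.smul_apply, Matrix.one_apply]
      by_cases huv : u = v <;> simp [huv]
    -- selector
    set sel : Finset (Sym2 V ⊕ V) → V → Sym2 V ⊕ V := fun S =>
      if h : S.card = Fintype.card V then
        (fun i => ((S.equivFinOfCardEq h).symm (Fintype.equivFin V i) : Sym2 V ⊕ V))
      else fun _ => Sum.inr v0 with hsel
    have hselinj : ∀ S : Finset (Sym2 V ⊕ V), S.card = Fintype.card V →
        Function.Injective (sel S) := by
      intro S hS
      rw [hsel]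
      simp only [dif_pos hS]
      intro a b hab
      exact (Fintype.equivFin V).injective
        ((S.equivFinOfCardEq hS).symm.injective (Subtype.ext hab))
    have hselim : ∀ S : Finset (Sym2 V ⊕ V), S.card = Fintype.card V →
        Finset.image (sel S) univ = S := by
      intro S hS
      rw [hsel]
      simp only [dif_pos hS]
      ext c
      simp only [Finset.mem_image, Finset.mem_univ, true_and]
      constructor
      · rintro ⟨i, rfl⟩
        exact ((S.equivFinOfCardEq hS).symm _).2
      · intro hc
        refine ⟨(Fintype.equivFin V).symm ((S.equivFinOfCardEq hS) ⟨c, hc⟩), ?_⟩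
        simp
    have hCB := GrimmettAux.det_mul_transpose_self (GrimmettAux2.Bmat H t) sel hselinj hselim
    set F : Finset (Sym2 V) × V → Finset (Sym2 V ⊕ V) :=
      fun p => p.1.image Sum.inl ∪ {Sum.inr p.2} with hF
    have hFmem : ∀ p ∈ T ×ˢ (univ : Finset V), F p ∈ univ.powersetCard (Fintype.card V) := by
      intro p hp
      rw [Finset.mem_product] at hp
      obtain ⟨hp1, -⟩ := hp
      rw [hT, Finset.mem_filter] at hp1
      rw [Finset.mem_powersetCard_univ, hF]
      have hdisj : Disjoint (p.1.image Sum.inl) ({Sum.inr p.2} : Finset (Sym2 V ⊕ V)) := by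
        rw [Finset.disjoint_left]
        rintro c hc1 hc2
        rw [Finset.mem_image] at hc1
        obtain ⟨e, -, rfl⟩ := hc1
        simp at hc2
      rw [Finset.card_union_of_disjoint hdisj,
        Finset.card_image_of_injective _ Sum.inl_injective, Finset.card_singleton]
      exact GrimmettAux2.tree_card H hp1.2.1 hp1.2.2
    have hFinj : ∀ p ∈ T ×ˢ (univ : Finset V), ∀ q ∈ T ×ˢ (univ : Finset V),
        F p = F q → p = q := by
      intro p _ q _ hpq
      have h1 : p.1 = q.1 := by
        ext e
        have h : Sum.inl e ∈ F p ↔ Sum.inl e ∈ F q := by rw [hpq]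
        simpa [hF] using h
      have h2 : p.2 = q.2 := by
        have h : Sum.inr p.2 ∈ F q := by
          rw [← hpq]
          simp [hF]
        simpa [hF] using h
      exact Prod.ext h1 h2
    have hterm : ∀ p ∈ T ×ˢ (univ : Finset V),
        t ≤ Matrix.det ((GrimmettAux2.Bmat H t).submatrix id (sel (F p))) ^ 2 := by
      intro p hp
      have hS := Finset.mem_powersetCard_univ.mp (hFmem p hp)
      rw [Finset.mem_product, hT] at hp
      obtain ⟨hp1, -⟩ := hp
      rw [Finset.mem_filter] at hp1
      exact GrimmettAux2.det_sq_ge H ht hp1.2.1 hp1.2.2 p.2 (hselinj _ hS)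
        (by rw [hselim _ hS, hF])
    have hsum1 : (τ : ℝ) * n * t ≤ Matrix.det (L + t • 1) := by
      rw [← hBB, hCB]
      calc (τ:ℝ) * n * t = ∑ _p ∈ T ×ˢ (univ : Finset V), t := by
            rw [Finset.sum_const, Finset.card_product, Finset.card_univ, ← hn, nsmul_eq_mul]
            push_cast
            ring
        _ ≤ ∑ p ∈ T ×ˢ (univ : Finset V),
              Matrix.det ((GrimmettAux2.Bmat H t).submatrix id (sel (F p))) ^ 2 :=
            Finset.sum_le_sum hterm
        _ = ∑ S ∈ (T ×ˢ (univ : Finset V)).image F,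
              Matrix.det ((GrimmettAux2.Bmat H t).submatrix id (sel S)) ^ 2 :=
            (Finset.sum_image (f := fun S => Matrix.det ((GrimmettAux2.Bmat H t).submatrix id (sel S)) ^ 2) hFinj).symm
        _ ≤ ∑ S ∈ univ.powersetCard (Fintype.card V),
              Matrix.det ((GrimmettAux2.Bmat H t).submatrix id (sel S)) ^ 2 := by
            refine Finset.sum_le_sum_of_subset_of_nonneg ?_ (fun S _ _ => sq_nonneg _)
            exact Finset.image_subset_iff.mpr hFmem
    have hdet : Matrix.det (L + t • 1) = ∏ i, (μ i + t) := GrimmettAux3.det_add_smul_one hHerm t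
    have hsplit : ∏ i, (μ i + t) = t * ∏ i ∈ univ.erase j0, (μ i + t) := by
      rw [← Finset.mul_prod_erase univ _ (Finset.mem_univ j0), hj0, zero_add]
    have hfin : (τ:ℝ) * n * t ≤ t * ∏ i ∈ univ.erase j0, (μ i + t) := by
      rw [← hsplit, ← hdet]
      exact hsum1
    rw [mul_comm t _] at hfin
    exact le_of_mul_le_mul_right hfin ht
  -- AM-GM step
  have hP : ∀ t : ℝ, 0 < t →
      (τ:ℝ) * n ≤ (2*(m:ℝ)/((n:ℝ)-1) + t) ^ (n - 1) := by
    intro t ht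
    refine (hmain t ht).trans ?_
    have hcard : (univ.erase j0).card = n - 1 := by
      rw [Finset.card_erase_of_mem (Finset.mem_univ j0), Finset.card_univ, hn]
    have hAM := GrimmettAux3.prod_le_pow_card_avg (univ.erase j0) (fun i => μ i + t)
      (fun i _ => by have := hμ0 i; linarith)
    rw [hcard] at hAM
    refine hAM.trans ?_
    have hsum2 : ∑ i ∈ univ.erase j0, (μ i + t) = 2*(m:ℝ) + ((n - 1 : ℕ) : ℝ) * t := by
      rw [Finset.sum_add_distrib, Finset.sum_const, hcard,
        Finset.sum_erase_eq_sub (Finset.mem_univ j0), hj0, sub_zero, hμsum, nsmul_eq_mul]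
    rw [hsum2]
    have hc : ((n - 1 : ℕ) : ℝ) = (n:ℝ) - 1 := by
      rw [Nat.cast_sub hn1, Nat.cast_one]
    refine pow_le_pow_left₀ ?_ ?_ _
    · have hnum : 0 ≤ 2*(m:ℝ) + ((n - 1 : ℕ) : ℝ) * t := by positivity
      positivity
    · rw [hc]
      rcases eq_or_lt_of_le (by linarith : (0:ℝ) ≤ (n:ℝ) - 1) with hzero | hpos
      · rw [← hzero, div_zero, div_zero, zero_add]
        linarith
      · have hne : ((n:ℝ) - 1) ≠ 0 := hpos.ne'
        rw [show (2*(m:ℝ) + ((n:ℝ)-1)*t) / ((n:ℝ)-1) = 2*(m:ℝ)/((n:ℝ)-1) + t from by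
          field_simp]
  -- limit t → 0+
  have hlim : (τ:ℝ) * n ≤ (2*(m:ℝ)/((n:ℝ)-1)) ^ (n-1) := by
    have hcont : Filter.Tendsto (fun t : ℝ => (2*(m:ℝ)/((n:ℝ)-1) + t) ^ (n-1))
        (nhdsWithin 0 (Set.Ioi 0)) (nhds ((2*(m:ℝ)/((n:ℝ)-1) + 0) ^ (n-1))) := by
      apply Filter.Tendsto.mono_left ?_ nhdsWithin_le_nhds
      exact Continuous.tendsto ((continuous_const.add continuous_id).pow (n-1)) 0
    rw [add_zero] at hcont
    refine ge_of_tendsto hcont ?_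
    exact eventually_mem_nhdsWithin.mono (fun t ht => hP t ht)
  -- conclude
  rw [hτ]
  rw [show (1 / (n:ℝ)) * (2 * (m:ℝ) / ((n:ℝ) - 1)) ^ (n - 1)
    = (2 * (m:ℝ) / ((n:ℝ) - 1)) ^ (n - 1) / n from by ring]
  rw [le_div_iff₀ hn0]
  exact hlim
end

section
/- Let G be a connected graph on n vertices containing an edge ab such that a and b have at least d common neighbors. If T is a uniformly random spanning tree of G, then P[ab ∈ T] ≤ 2/(d+2). -/
open SimpleGraph

section Lemmas

variable {V : Type*} [DecidableEq V]

/-- Splitting lemma: a walk in `fromEdgeSet s` either survives deleting the edge `s(x,y)`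
or its start reaches `x` or `y` in the smaller graph. -/
lemma reach_erase {s : Finset (Sym2 V)} {v w x y : V}
    (h : (fromEdgeSet (s : Set (Sym2 V))).Reachable v w) :
    (fromEdgeSet ((s.erase s(x, y) : Finset (Sym2 V)) : Set (Sym2 V))).Reachable v w ∨
    (fromEdgeSet ((s.erase s(x, y) : Finset (Sym2 V)) : Set (Sym2 V))).Reachable v x ∨
    (fromEdgeSet ((s.erase s(x, y) : Finset (Sym2 V)) : Set (Sym2 V))).Reachable v y := by
  obtain ⟨p⟩ := h
  induction p with
  | nil => exact Or.inl (Reachable.refl _)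
  | @cons u u' w hadj q ih =>
    rw [fromEdgeSet_adj] at hadj
    by_cases heq : s(u, u') = s(x, y)
    · rw [Sym2.eq_iff] at heq
      rcases heq with ⟨rfl, rfl⟩ | ⟨rfl, rfl⟩
      · exact Or.inr (Or.inl (Reachable.refl _))
      · exact Or.inr (Or.inr (Reachable.refl _))
    · have hadj' : (fromEdgeSet ((s.erase s(x, y) : Finset (Sym2 V)) : Set (Sym2 V))).Adj u u' := by
        rw [fromEdgeSet_adj]
        exact ⟨Finset.mem_coe.2 (Finset.mem_erase.2 ⟨heq, hadj.1⟩), hadj.2⟩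
      rcases ih with h' | h' | h'
      · exact Or.inl (hadj'.reachable.trans h')
      · exact Or.inr (Or.inl (hadj'.reachable.trans h'))
      · exact Or.inr (Or.inr (hadj'.reachable.trans h'))

lemma erase_graph (s : Finset (Sym2 V)) (e : Sym2 V) :
    fromEdgeSet (s : Set (Sym2 V)) \ fromEdgeSet {e} =
      fromEdgeSet ((s.erase e : Finset (Sym2 V)) : Set (Sym2 V)) := by
  ext v w
  simp only [sdiff_adj, fromEdgeSet_adj, Set.mem_singleton_iff, Finset.mem_coe,
    Finset.mem_erase]
  tauto

/-- In a tree given by an edge finset, removing an edge disconnects its endpoints. -/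
lemma bridge_erase {s : Finset (Sym2 V)} (hs : (fromEdgeSet (s : Set (Sym2 V))).IsTree)
    {x y : V} (hxy : s(x, y) ∈ s) (hne : x ≠ y) :
    ¬ (fromEdgeSet ((s.erase s(x, y) : Finset (Sym2 V)) : Set (Sym2 V))).Reachable x y := by
  have hbr : (fromEdgeSet (s : Set (Sym2 V))).IsBridge s(x, y) := by
    refine (isAcyclic_iff_forall_edge_isBridge.1 hs.2) ?_
    rw [mem_edgeSet, fromEdgeSet_adj]
    exact ⟨hxy, hne⟩
  rw [isBridge_iff] at hbr
  rw [← erase_graph]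
  exact hbr

/-- Tree exchange: replace the edge `s(x,y)` by `s(c,y)` where `c` is on the `x`-side. -/
lemma exchange {s : Finset (Sym2 V)} (hs : (fromEdgeSet (s : Set (Sym2 V))).IsTree)
    {x y c : V} (hxy : s(x, y) ∈ s) (hne : x ≠ y) (hcx : c ≠ x) (hcy : c ≠ y)
    (hreach : (fromEdgeSet ((s.erase s(x, y) : Finset (Sym2 V)) : Set (Sym2 V))).Reachable c x) :
    (fromEdgeSet ((insert s(c, y) (s.erase s(x, y)) : Finset (Sym2 V)) : Set (Sym2 V))).IsTree ∧
      s(c, y) ∉ s := by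
  set H := fromEdgeSet ((s.erase s(x, y) : Finset (Sym2 V)) : Set (Sym2 V)) with hH
  set H' := fromEdgeSet ((insert s(c, y) (s.erase s(x, y)) : Finset (Sym2 V)) : Set (Sym2 V))
    with hH'
  have hbr : ¬ H.Reachable x y := bridge_erase hs hxy hne
  have hcyne : s(c, y) ≠ s(x, y) := by
    intro h
    rw [Sym2.eq_iff] at h
    rcases h with ⟨rfl, -⟩ | ⟨rfl, rfl⟩ <;> simp_all
  have hnmem : s(c, y) ∉ s := by
    intro hmem
    have : H.Adj c y := by
      rw [hH, fromEdgeSet_adj]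
      exact ⟨Finset.mem_coe.2 (Finset.mem_erase.2 ⟨hcyne, hmem⟩), hcy⟩
    exact hbr (hreach.symm.trans this.reachable)
  have hle : H ≤ H' := fromEdgeSet_mono (by intro e he; simp_all [Finset.mem_insert])
  have hcyadj : H'.Adj c y := by
    rw [hH', fromEdgeSet_adj]
    exact ⟨Finset.mem_coe.2 (Finset.mem_insert_self _ _), hcy⟩
  have hreachy : ∀ v : V, H'.Reachable v y := by
    intro v
    rcases reach_erase (x := x) (y := y) (hs.1.preconnected v x) with h' | h' | h'
    · exact ((h'.mono hle).trans (hreach.symm.mono hle)).trans hcyadj.reachable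
    · exact ((h'.mono hle).trans (hreach.symm.mono hle)).trans hcyadj.reachable
    · exact h'.mono hle
  have hconn : H'.Connected := by
    rw [connected_iff]
    exact ⟨fun u v => (hreachy u).trans (hreachy v).symm, hs.1.nonempty⟩
  have hacyc : H'.IsAcyclic := by
    intro u p hp
    by_cases hmem : s(c, y) ∈ p.edges
    · have : (H' \ fromEdgeSet {s(c, y)}).Reachable c y :=
        (adj_and_reachable_delete_edges_iff_exists_cycle.2 ⟨u, p, hp, hmem⟩).2
      rw [hH', erase_graph, Finset.erase_insert
        (fun h => hnmem (Finset.mem_of_mem_erase h))] at this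
      exact hbr (hreach.symm.trans this)
    · have hedges : ∀ e ∈ p.edges, e ∈ H.edgeSet := by
        intro e he
        have := p.edges_subset_edgeSet he
        rw [hH', edgeSet_fromEdgeSet] at this
        rw [hH, edgeSet_fromEdgeSet]
        obtain ⟨h1, h2⟩ := this
        rcases Finset.mem_insert.1 (Finset.mem_coe.1 h1) with rfl | h1'
        · exact absurd he hmem
        · exact ⟨Finset.mem_coe.2 h1', h2⟩
      have hle2 : H ≤ fromEdgeSet (s : Set (Sym2 V)) :=
        fromEdgeSet_mono (Finset.coe_subset.2 (Finset.erase_subset _ _))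
      exact hs.2 _ ((hp.transfer hedges).mapLe hle2)
  exact ⟨⟨hconn, hacyc⟩, hnmem⟩

/-- Only one edge at `b` can be exchanged for a fixed pair: uniqueness of the neighbour. -/
lemma unique_c {s : Finset (Sym2 V)} (hs : (fromEdgeSet (s : Set (Sym2 V))).IsTree)
    {a b c c' : V} (hc : s(c, b) ∈ s) (hc' : s(c', b) ∈ s) (hcb : c ≠ b) (hc'b : c' ≠ b)
    (h1 : ¬ (fromEdgeSet ((s.erase s(c, b) : Finset (Sym2 V)) : Set (Sym2 V))).Reachable a b)
    (h2 : ¬ (fromEdgeSet ((s.erase s(c', b) : Finset (Sym2 V)) : Set (Sym2 V))).Reachable a b) :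
    c = c' := by
  by_contra hne
  have hedne : s(c, b) ≠ s(c', b) := by
    intro h; rw [Sym2.eq_iff] at h
    rcases h with ⟨rfl, -⟩ | ⟨rfl, rfl⟩ <;> simp_all
  set H1 := fromEdgeSet ((s.erase s(c, b) : Finset (Sym2 V)) : Set (Sym2 V)) with hH1
  set H2 := fromEdgeSet ((s.erase s(c', b) : Finset (Sym2 V)) : Set (Sym2 V)) with hH2
  set H12 := fromEdgeSet (((s.erase s(c, b)).erase s(c', b) : Finset (Sym2 V)) : Set (Sym2 V))
    with hH12
  have h12le1 : H12 ≤ H1 := fromEdgeSet_mono (Finset.coe_subset.2 (Finset.erase_subset _ _))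
  have h12le2 : H12 ≤ H2 := by
    rw [hH12, Finset.erase_right_comm]
    exact fromEdgeSet_mono (Finset.coe_subset.2 (Finset.erase_subset _ _))
  have hadj1 : H1.Adj c' b := by
    rw [hH1, fromEdgeSet_adj]
    exact ⟨Finset.mem_coe.2 (Finset.mem_erase.2 ⟨fun h => hedne h.symm, hc'⟩), hc'b⟩
  have hadj2 : H2.Adj c b := by
    rw [hH2, fromEdgeSet_adj]
    exact ⟨Finset.mem_coe.2 (Finset.mem_erase.2 ⟨hedne, hc⟩), hcb⟩
  have hac : H1.Reachable a c := by
    rcases reach_erase (x := c) (y := b) (hs.1.preconnected a b) with h' | h' | h'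
    · exact absurd h' h1
    · exact h'
    · exact absurd h' h1
  rcases reach_erase (s := s.erase s(c, b)) (x := c') (y := b) hac with h' | h' | h'
  · exact h2 ((h'.mono h12le2).trans hadj2.reachable)
  · exact h1 ((h'.mono h12le1).trans hadj1.reachable)
  · exact h1 (h'.mono h12le1)

end Lemmas

/-- Let `G` be a connected graph containing an edge `ab` such that `a` and
`b` have at least `d` common neighbours. If `T` is a uniformly random spanning tree of `G`,
then `P[ab ∈ T] ≤ 2/(d+2)`. -/
theorem ust_edge_prob_le_common_neighbors {V : Type*} [Fintype V] (G : SimpleGraph V)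
    (hG : G.Connected) (a b : V) (hab : G.Adj a b) (d : ℕ)
    (hd : d ≤ {c : V | G.Adj a c ∧ G.Adj b c}.ncard) :
    ({s ∈ spanningTrees G | s(a, b) ∈ s}.ncard : ℝ) / ((spanningTrees G).ncard : ℝ) ≤
      2 / ((d : ℝ) + 2) := by
  classical
  set 𝒯 : Finset (Finset (Sym2 V)) := Finset.univ.filter (fun s => s ∈ spanningTrees G) with h𝒯
  set A : Finset (Finset (Sym2 V)) := 𝒯.filter (fun s => s(a, b) ∈ s) with hA
  set B : Finset (Finset (Sym2 V)) := 𝒯.filter (fun s => ¬ s(a, b) ∈ s) with hB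
  set Cf : Finset V := Finset.univ.filter (fun c => G.Adj a c ∧ G.Adj b c) with hCf
  have hdC : d ≤ Cf.card := by
    have : {c : V | G.Adj a c ∧ G.Adj b c} = (Cf : Set V) := by
      ext c; simp [hCf]
    rwa [this, Set.ncard_coe_finset] at hd
  -- the exchange map
  set F : Finset (Sym2 V) × V → Finset (Sym2 V) × Bool := fun p =>
    if (fromEdgeSet ((p.1.erase s(a, b) : Finset (Sym2 V)) : Set (Sym2 V))).Reachable p.2 a
    then (insert s(p.2, b) (p.1.erase s(a, b)), true)
    else (insert s(p.2, a) (p.1.erase s(a, b)), false) with hF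
  -- basic facts about elements of A and Cf
  have hmemA : ∀ t ∈ A, (↑t ⊆ G.edgeSet ∧ (fromEdgeSet (t : Set (Sym2 V))).IsTree)
      ∧ s(a, b) ∈ t := by
    intro t ht
    rw [hA, Finset.mem_filter, h𝒯, Finset.mem_filter] at ht
    exact ⟨ht.1.2, ht.2⟩
  have hmemC : ∀ c ∈ Cf, G.Adj a c ∧ G.Adj b c := by
    intro c hc
    rw [hCf, Finset.mem_filter] at hc
    exact hc.2
  -- the key dichotomy and per-branch properties
  have hbranch : ∀ t ∈ A, ∀ c ∈ Cf,
      ((fromEdgeSet ((t.erase s(a, b) : Finset (Sym2 V)) : Set (Sym2 V))).Reachable c a →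
        (fromEdgeSet ((insert s(c, b) (t.erase s(a, b)) : Finset (Sym2 V)) :
          Set (Sym2 V))).IsTree ∧ s(c, b) ∉ t) ∧
      (¬ (fromEdgeSet ((t.erase s(a, b) : Finset (Sym2 V)) : Set (Sym2 V))).Reachable c a →
        (fromEdgeSet ((insert s(c, a) (t.erase s(a, b)) : Finset (Sym2 V)) :
          Set (Sym2 V))).IsTree ∧ s(c, a) ∉ t) := by
    intro t ht c hc
    obtain ⟨⟨hsub, htree⟩, habt⟩ := hmemA t ht
    obtain ⟨hac, hbc⟩ := hmemC c hc
    have hca : c ≠ a := hac.ne'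
    have hcb : c ≠ b := hbc.ne'
    constructor
    · intro hr
      exact exchange htree habt hab.ne hca hcb hr
    · intro hr
      have hswap : (s(b, a) : Sym2 V) = s(a, b) := Sym2.eq_swap
      have hrb : (fromEdgeSet ((t.erase s(a, b) : Finset (Sym2 V)) :
          Set (Sym2 V))).Reachable c b := by
        rcases reach_erase (x := a) (y := b) (htree.1.preconnected c a) with h' | h' | h'
        · exact absurd h' hr
        · exact absurd h' hr
        · exact h'
      have := exchange (x := b) (y := a) (c := c) htree (by rw [hswap]; exact habt)
        hab.ne.symm hcb hca (by rw [hswap]; exact hrb)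
      rwa [hswap] at this
  -- F maps A ×ˢ Cf into B ×ˢ univ
  have hmaps : ∀ p ∈ A ×ˢ Cf, F p ∈ B ×ˢ (Finset.univ : Finset Bool) := by
    rintro ⟨t, c⟩ hp
    rw [Finset.mem_product] at hp
    obtain ⟨⟨hsub, htree⟩, habt⟩ := hmemA t hp.1
    obtain ⟨hac, hbc⟩ := hmemC c hp.2
    have hca : c ≠ a := hac.ne'
    have hcb : c ≠ b := hbc.ne'
    obtain ⟨hb1, hb2⟩ := hbranch t hp.1 c hp.2
    rw [Finset.mem_product]
    refine ⟨?_, Finset.mem_univ _⟩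
    rw [hB, Finset.mem_filter, h𝒯, Finset.mem_filter]
    by_cases hr : (fromEdgeSet ((t.erase s(a, b) : Finset (Sym2 V)) :
        Set (Sym2 V))).Reachable c a
    · obtain ⟨hS, hnm⟩ := hb1 hr
      have hFp : F (t, c) = (insert s(c, b) (t.erase s(a, b)), true) := by
        rw [hF]; exact if_pos hr
      rw [hFp]
      refine ⟨⟨Finset.mem_univ _, ?_, hS⟩, ?_⟩
      · intro e he
        rcases Finset.mem_insert.1 (Finset.mem_coe.1 he) with rfl | h'
        · exact (mem_edgeSet G).2 (hbc.symm)
        · exact hsub (Finset.mem_coe.2 (Finset.mem_of_mem_erase h'))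
      · simp only [Finset.mem_insert]
        push_neg
        constructor
        · intro h; rw [Sym2.eq_iff] at h
          rcases h with ⟨h1, -⟩ | ⟨h1, -⟩
          exacts [hca h1.symm, hab.ne h1]
        · exact Finset.notMem_erase _ _
    · obtain ⟨hS, hnm⟩ := hb2 hr
      have hFp : F (t, c) = (insert s(c, a) (t.erase s(a, b)), false) := by
        rw [hF]; exact if_neg hr
      rw [hFp]
      refine ⟨⟨Finset.mem_univ _, ?_, hS⟩, ?_⟩
      · intro e he
        rcases Finset.mem_insert.1 (Finset.mem_coe.1 he) with rfl | h'
        · exact (mem_edgeSet G).2 (hac.symm)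
        · exact hsub (Finset.mem_coe.2 (Finset.mem_of_mem_erase h'))
      · simp only [Finset.mem_insert]
        push_neg
        constructor
        · intro h; rw [Sym2.eq_iff] at h
          rcases h with ⟨h1, -⟩ | ⟨-, h2⟩
          exacts [hca h1.symm, hcb h2.symm]
        · exact Finset.notMem_erase _ _
  -- F is injective on A ×ˢ Cf
  have hinj : Set.InjOn F (A ×ˢ Cf : Finset _) := by
    rintro ⟨t, c⟩ hp ⟨t', c'⟩ hq hFeq
    rw [Finset.coe_product] at hp hq
    obtain ⟨hpA, hpC⟩ := hp
    obtain ⟨hqA, hqC⟩ := hq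
    simp only [Finset.mem_coe] at hpA hpC hqA hqC
    obtain ⟨⟨hsub, htree⟩, habt⟩ := hmemA t hpA
    obtain ⟨⟨hsub', htree'⟩, habt'⟩ := hmemA t' hqA
    obtain ⟨hac, hbc⟩ := hmemC c hpC
    obtain ⟨hac', hbc'⟩ := hmemC c' hqC
    have hca : c ≠ a := hac.ne'
    have hcb : c ≠ b := hbc.ne'
    have hca' : c' ≠ a := hac'.ne'
    have hcb' : c' ≠ b := hbc'.ne'
    obtain ⟨hb1, hb2⟩ := hbranch t hpA c hpC
    obtain ⟨hb1', hb2'⟩ := hbranch t' hqA c' hqC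
    by_cases hr : (fromEdgeSet ((t.erase s(a, b) : Finset (Sym2 V)) :
        Set (Sym2 V))).Reachable c a <;>
      by_cases hr' : (fromEdgeSet ((t'.erase s(a, b) : Finset (Sym2 V)) :
        Set (Sym2 V))).Reachable c' a
    · -- both true branch
      obtain ⟨hS, hnm⟩ := hb1 hr
      obtain ⟨hS', hnm'⟩ := hb1' hr'
      rw [hF] at hFeq
      simp only [if_pos hr, if_pos hr'] at hFeq
      have hSeq : insert s(c, b) (t.erase s(a, b)) = insert s(c', b) (t'.erase s(a, b)) :=
        (Prod.mk.injEq _ _ _ _ ▸ hFeq).1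
      have he1 : (insert s(c, b) (t.erase s(a, b))).erase s(c, b) = t.erase s(a, b) :=
        Finset.erase_insert (fun h => hnm (Finset.mem_of_mem_erase h))
      have he2 : (insert s(c', b) (t'.erase s(a, b))).erase s(c', b) = t'.erase s(a, b) :=
        Finset.erase_insert (fun h => hnm' (Finset.mem_of_mem_erase h))
      have hcc : c = c' := by
        refine unique_c (a := a) (b := b) hS (Finset.mem_insert_self _ _)
          (hSeq ▸ Finset.mem_insert_self _ _) hcb hcb' ?_ ?_
        · rw [he1]; exact bridge_erase htree habt hab.ne
        · rw [hSeq, he2]; exact bridge_erase htree' habt' hab.ne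
      subst hcc
      have htt : t = t' := by
        have : t.erase s(a, b) = t'.erase s(a, b) := by
          rw [← he1, ← he2, hSeq]
        calc t = insert s(a, b) (t.erase s(a, b)) := (Finset.insert_erase habt).symm
          _ = insert s(a, b) (t'.erase s(a, b)) := by rw [this]
          _ = t' := Finset.insert_erase habt'
      rw [htt]
    · -- true/false: impossible
      rw [hF] at hFeq
      simp only [if_pos hr, if_neg hr'] at hFeq
      exact absurd (Prod.mk.injEq _ _ _ _ ▸ hFeq).2 (by simp)
    · rw [hF] at hFeq
      simp only [if_neg hr, if_pos hr'] at hFeq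
      exact absurd (Prod.mk.injEq _ _ _ _ ▸ hFeq).2 (by simp)
    · -- both false branch
      obtain ⟨hS, hnm⟩ := hb2 hr
      obtain ⟨hS', hnm'⟩ := hb2' hr'
      rw [hF] at hFeq
      simp only [if_neg hr, if_neg hr'] at hFeq
      have hSeq : insert s(c, a) (t.erase s(a, b)) = insert s(c', a) (t'.erase s(a, b)) :=
        (Prod.mk.injEq _ _ _ _ ▸ hFeq).1
      have he1 : (insert s(c, a) (t.erase s(a, b))).erase s(c, a) = t.erase s(a, b) :=
        Finset.erase_insert (fun h => hnm (Finset.mem_of_mem_erase h))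
      have he2 : (insert s(c', a) (t'.erase s(a, b))).erase s(c', a) = t'.erase s(a, b) :=
        Finset.erase_insert (fun h => hnm' (Finset.mem_of_mem_erase h))
      have hswap : (s(b, a) : Sym2 V) = s(a, b) := Sym2.eq_swap
      have hcc : c = c' := by
        refine unique_c (a := b) (b := a) hS (Finset.mem_insert_self _ _)
          (hSeq ▸ Finset.mem_insert_self _ _) hca hca' ?_ ?_
        · rw [he1]
          have := bridge_erase (x := b) (y := a) htree (by rw [hswap]; exact habt) hab.ne.symm
          rwa [hswap] at this
        · rw [hSeq, he2]
          have := bridge_erase (x := b) (y := a) htree' (by rw [hswap]; exact habt') hab.ne.symm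
          rwa [hswap] at this
      subst hcc
      have htt : t = t' := by
        have : t.erase s(a, b) = t'.erase s(a, b) := by
          rw [← he1, ← he2, hSeq]
        calc t = insert s(a, b) (t.erase s(a, b)) := (Finset.insert_erase habt).symm
          _ = insert s(a, b) (t'.erase s(a, b)) := by rw [this]
          _ = t' := Finset.insert_erase habt'
      rw [htt]
  -- counting
  have hcards : A.card * Cf.card ≤ B.card * 2 := by
    have := Finset.card_le_card_of_injOn F hmaps hinj
    rwa [Finset.card_product, Finset.card_product, Finset.card_univ, Fintype.card_bool] at this
  have hAB : A.card + B.card = 𝒯.card := by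
    rw [hA, hB]
    exact Finset.card_filter_add_card_filter_not _
  have hkey : A.card * (d + 2) ≤ 2 * 𝒯.card := by
    have h1 : A.card * d ≤ A.card * Cf.card := Nat.mul_le_mul_left _ hdC
    calc A.card * (d + 2) = A.card * d + A.card * 2 := by ring
      _ ≤ A.card * Cf.card + A.card * 2 := Nat.add_le_add_right h1 _
      _ ≤ B.card * 2 + A.card * 2 := Nat.add_le_add_right hcards _
      _ = 2 * 𝒯.card := by rw [← hAB]; ring
  -- identify the set cardinalities
  have hsetA : {s ∈ spanningTrees G | s(a, b) ∈ s} = (A : Set (Finset (Sym2 V))) := by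
    ext t
    simp only [Set.mem_setOf_eq, hA, h𝒯, Finset.coe_filter, Finset.mem_filter,
      Finset.mem_univ, true_and, Set.mem_setOf_eq]
  have hsetT : spanningTrees G = (𝒯 : Set (Finset (Sym2 V))) := by
    ext t
    simp only [h𝒯, Finset.coe_filter, Finset.mem_univ, true_and, Set.mem_setOf_eq]
  rw [hsetA, hsetT, Set.ncard_coe_finset, Set.ncard_coe_finset]
  by_cases hT : 𝒯.card = 0
  · have hA0 : A.card = 0 := by
      have : A.card ≤ 𝒯.card := Finset.card_le_card (Finset.filter_subset _ _)
      omega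
    rw [hA0, hT]
    simp
    positivity
  · have hTpos : (0 : ℝ) < 𝒯.card := Nat.cast_pos.2 (Nat.pos_of_ne_zero hT)
    rw [div_le_div_iff₀ hTpos (by positivity)]
    have hcast : ((A.card * (d + 2) : ℕ) : ℝ) ≤ ((2 * 𝒯.card : ℕ) : ℝ) := Nat.cast_le.2 hkey
    push_cast at hcast ⊢
    linarith
end

section
/- Let k = O(n^α) with 0 < α < 1/11 fixed, and let T₁,…,T_k be independent uniformly random spanning trees of K_n. Let M_n = k(n-1) - |T₁ ∪ ⋯ ∪ T_k| (edges counted in the union). Then for every integer a ≥ 0, P[M_n = a] ≤ (k(k-1))^a / a!. -/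
/-- The number of `k`-tuples `(T₁,…,T_k)` of spanning trees of `K_n` whose union has
exactly `k(n-1) - a` edges (the condition is phrased additively to avoid truncated
subtraction). -/
noncomputable def treeTupleCount (n k a : ℕ) : ℕ :=
  {t : Fin k → Finset (Sym2 (Fin n)) |
      (∀ i, t i ∈ spanningTrees (⊤ : SimpleGraph (Fin n))) ∧
      k * (n - 1) = (Finset.univ.biUnion t).card + a}.ncard

namespace TreeDef

open SimpleGraph Finset
open scoped Classical

variable {n : ℕ}

noncomputable def TS (n : ℕ) : Finset (Finset (Sym2 (Fin n))) :=
  (Set.toFinite (spanningTrees (⊤ : SimpleGraph (Fin n)))).toFinset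

lemma mem_TS' {T : Finset (Sym2 (Fin n))} :
    T ∈ TS n ↔ T ∈ spanningTrees (⊤ : SimpleGraph (Fin n)) :=
  Set.Finite.mem_toFinset _

lemma mem_TS {T : Finset (Sym2 (Fin n))} :
    T ∈ TS n ↔ (↑T : Set (Sym2 (Fin n))) ⊆ (⊤ : SimpleGraph (Fin n)).edgeSet ∧
      (SimpleGraph.fromEdgeSet (↑T : Set (Sym2 (Fin n)))).IsTree := mem_TS'

lemma not_diag_of_mem_TS {T : Finset (Sym2 (Fin n))} {e : Sym2 (Fin n)}
    (hT : T ∈ TS n) (he : e ∈ T) : ¬ e.IsDiag := by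
  have := (mem_TS.mp hT).1 (Finset.mem_coe.mpr he)
  rwa [edgeSet_top, Set.mem_compl_iff, Sym2.mem_diagSet] at this

lemma ne_of_mem_TS {T : Finset (Sym2 (Fin n))} {x y : Fin n} (hT : T ∈ TS n)
    (he : s(x, y) ∈ T) : x ≠ y :=
  fun h => not_diag_of_mem_TS hT he (by rw [Sym2.mk_isDiag_iff]; exact h)

lemma card_TS {T : Finset (Sym2 (Fin n))} (hT : T ∈ TS n) : T.card = n - 1 := by
  obtain ⟨hsub, htree⟩ := mem_TS.mp hT
  haveI : Fintype (SimpleGraph.fromEdgeSet (↑T : Set (Sym2 (Fin n)))).edgeSet :=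
    Fintype.ofFinite _
  have h := htree.card_edgeFinset
  have hE : (SimpleGraph.fromEdgeSet (↑T : Set (Sym2 (Fin n)))).edgeFinset = T := by
    ext e
    rw [mem_edgeFinset, edgeSet_fromEdgeSet]
    constructor
    · rintro ⟨he, -⟩; exact Finset.mem_coe.mp he
    · intro he
      refine ⟨Finset.mem_coe.mpr he, fun hd => not_diag_of_mem_TS hT he hd⟩
  rw [hE, Fintype.card_fin] at h
  omega

lemma fromEdgeSet_erase (T : Finset (Sym2 (Fin n))) (e : Sym2 (Fin n)) :
    SimpleGraph.fromEdgeSet (↑(T.erase e) : Set (Sym2 (Fin n))) =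
      SimpleGraph.fromEdgeSet (↑T : Set (Sym2 (Fin n))) \ SimpleGraph.fromEdgeSet {e} := by
  ext a b
  simp only [fromEdgeSet_adj, Finset.coe_erase, Set.mem_diff, Set.mem_singleton_iff, sdiff_adj,
    Finset.mem_coe, Finset.mem_erase]
  tauto

lemma not_reach {T : Finset (Sym2 (Fin n))} {x y : Fin n} (hT : T ∈ TS n) (he : s(x, y) ∈ T) :
    ¬ (SimpleGraph.fromEdgeSet (↑(T.erase s(x, y)) : Set (Sym2 (Fin n)))).Reachable x y := by
  obtain ⟨hsub, htree⟩ := mem_TS.mp hT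
  have hxy : x ≠ y := ne_of_mem_TS hT he
  have hadj : (SimpleGraph.fromEdgeSet (↑T : Set (Sym2 (Fin n)))).Adj x y :=
    (fromEdgeSet_adj _).mpr ⟨Finset.mem_coe.mpr he, hxy⟩
  have hb := (isAcyclic_iff_forall_adj_isBridge.mp ((isTree_iff _).mp htree).2) hadj
  rw [isBridge_iff] at hb
  rw [fromEdgeSet_erase]
  exact hb

lemma reach_or {T : Finset (Sym2 (Fin n))} {x y : Fin n} (hT : T ∈ TS n) (he : s(x, y) ∈ T)
    (u : Fin n) :
    (SimpleGraph.fromEdgeSet (↑(T.erase s(x, y)) : Set (Sym2 (Fin n)))).Reachable x u ∨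
      (SimpleGraph.fromEdgeSet (↑(T.erase s(x, y)) : Set (Sym2 (Fin n)))).Reachable y u := by
  obtain ⟨hsub, htree⟩ := mem_TS.mp hT
  obtain ⟨w⟩ := ((isTree_iff _).mp htree).1.preconnected x u
  set H := SimpleGraph.fromEdgeSet (↑(T.erase s(x, y)) : Set (Sym2 (Fin n))) with hH
  suffices Haux : ∀ {a b : Fin n} (_ : (SimpleGraph.fromEdgeSet (↑T : Set (Sym2 (Fin n)))).Walk a b),
      (H.Reachable x a ∨ H.Reachable y a) → (H.Reachable x b ∨ H.Reachable y b) by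
    exact Haux w (Or.inl (Reachable.refl x))
  intro a b w
  induction w with
  | nil => exact id
  | @cons a c b h p ih =>
    intro hyp
    apply ih
    by_cases hce : s(a, c) = s(x, y)
    · rcases Sym2.eq_iff.mp hce with ⟨rfl, rfl⟩ | ⟨rfl, rfl⟩
      · exact Or.inr (Reachable.refl _)
      · exact Or.inl (Reachable.refl _)
    · have hadj : H.Adj a c := by
        rw [hH]
        refine (fromEdgeSet_adj _).mpr ⟨?_, h.ne⟩
        refine Finset.mem_coe.mpr (Finset.mem_erase.mpr ⟨hce, ?_⟩)
        exact Finset.mem_coe.mp ((fromEdgeSet_adj _).mp h).1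
      rcases hyp with hx | hy
      · exact Or.inl (hx.trans hadj.reachable)
      · exact Or.inr (hy.trans hadj.reachable)

lemma reach_ne {T : Finset (Sym2 (Fin n))} {x y v : Fin n} (hT : T ∈ TS n) (he : s(x, y) ∈ T)
    (hv : (SimpleGraph.fromEdgeSet (↑(T.erase s(x, y)) : Set (Sym2 (Fin n)))).Reachable x v) :
    v ≠ y := by
  rintro rfl
  exact not_reach hT he hv

lemma newEdge_not_mem {T : Finset (Sym2 (Fin n))} {x y v : Fin n} (hT : T ∈ TS n)
    (he : s(x, y) ∈ T)
    (hv : (SimpleGraph.fromEdgeSet (↑(T.erase s(x, y)) : Set (Sym2 (Fin n)))).Reachable x v) :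
    s(v, y) ∉ T.erase s(x, y) := by
  intro hmem
  have hvy : v ≠ y := reach_ne hT he hv
  have hadj : (SimpleGraph.fromEdgeSet (↑(T.erase s(x, y)) : Set (Sym2 (Fin n)))).Adj v y :=
    (fromEdgeSet_adj _).mpr ⟨Finset.mem_coe.mpr hmem, hvy⟩
  exact not_reach hT he (hv.trans hadj.reachable)

lemma reconnect {T : Finset (Sym2 (Fin n))} {x y v : Fin n} (hT : T ∈ TS n)
    (he : s(x, y) ∈ T)
    (hv : (SimpleGraph.fromEdgeSet (↑(T.erase s(x, y)) : Set (Sym2 (Fin n)))).Reachable x v) :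
    insert s(v, y) (T.erase s(x, y)) ∈ TS n := by
  obtain ⟨hsub, htree⟩ := mem_TS.mp hT
  have hxy : x ≠ y := ne_of_mem_TS hT he
  have hvy : v ≠ y := reach_ne hT he hv
  have hnm : s(v, y) ∉ T.erase s(x, y) := newEdge_not_mem hT he hv
  set e : Sym2 (Fin n) := s(x, y) with hedef
  set f : Sym2 (Fin n) := s(v, y) with hfdef
  set s' : Finset (Sym2 (Fin n)) := insert f (T.erase e) with hs'
  have hle : SimpleGraph.fromEdgeSet (↑(T.erase e) : Set (Sym2 (Fin n))) ≤
      SimpleGraph.fromEdgeSet (↑s' : Set (Sym2 (Fin n))) := by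
    apply fromEdgeSet_mono
    intro g hg
    exact Finset.mem_coe.mpr (Finset.mem_insert_of_mem (Finset.mem_coe.mp hg))
  have hadjvy : (SimpleGraph.fromEdgeSet (↑s' : Set (Sym2 (Fin n)))).Adj v y :=
    (fromEdgeSet_adj _).mpr ⟨Finset.mem_coe.mpr (Finset.mem_insert_self _ _), hvy⟩
  rw [mem_TS]
  constructor
  · intro g hg
    rcases Finset.mem_insert.mp (Finset.mem_coe.mp hg) with rfl | hg'
    · rw [edgeSet_top, Set.mem_compl_iff, Sym2.mem_diagSet, Sym2.mk_isDiag_iff]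
      exact hvy
    · exact hsub (Finset.mem_coe.mpr (Finset.mem_of_mem_erase hg'))
  · rw [isTree_iff]
    constructor
    · -- connected
      have hall : ∀ u : Fin n, (SimpleGraph.fromEdgeSet (↑s' : Set (Sym2 (Fin n)))).Reachable u y := by
        intro u
        rcases reach_or hT he u with h | h
        · exact ((h.mono hle).symm.trans (hv.mono hle)).trans hadjvy.reachable
        · exact (h.mono hle).symm
      haveI : Nonempty (Fin n) := ⟨x⟩
      exact Connected.mk (fun a b => (hall a).trans (hall b).symm)
    · -- acyclic
      intro u c hc
      by_cases hfe : f ∈ c.edges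
      · have hkey := (adj_and_reachable_delete_edges_iff_exists_cycle
          (G := SimpleGraph.fromEdgeSet (↑s' : Set (Sym2 (Fin n)))) (v := v) (w := y)).mpr
          ⟨u, c, hc, hfe⟩
        have hreach := hkey.2
        rw [deleteEdges, ← fromEdgeSet_erase] at hreach
        rw [show s'.erase f = T.erase e from by rw [hs', Finset.erase_insert hnm]] at hreach
        exact not_reach hT he (hv.trans hreach)
      · have hsubE : ∀ g ∈ c.edges,
            g ∈ (SimpleGraph.fromEdgeSet (↑T : Set (Sym2 (Fin n)))).edgeSet := by
          intro g hg
          have hgE := c.edges_subset_edgeSet hg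
          rw [edgeSet_fromEdgeSet] at hgE ⊢
          obtain ⟨hg1, hg2⟩ := hgE
          rcases Finset.mem_insert.mp (Finset.mem_coe.mp hg1) with rfl | hg'
          · exact absurd hg hfe
          · exact ⟨Finset.mem_coe.mpr (Finset.mem_of_mem_erase hg'), hg2⟩
        exact ((isTree_iff _).mp htree).2 (c.transfer _ hsubE) (hc.transfer hsubE)

lemma path_edge_at_head {G : SimpleGraph (Fin n)} {y x : Fin n} {q : G.Walk y x}
    (hq : q.IsPath) {g g' : Sym2 (Fin n)} (hg : g ∈ q.edges) (hy : y ∈ g)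
    (hg' : g' ∈ q.edges) (hy' : y ∈ g') : g = g' := by
  cases q with
  | nil => simp at hg
  | @cons _ c _ h p =>
    have hpath := (Walk.cons_isPath_iff h p).mp hq
    have key : ∀ {g₀ : Sym2 (Fin n)}, g₀ ∈ p.edges → y ∈ g₀ → False := by
      intro g₀ hg₀ hy₀
      obtain ⟨z, rfl⟩ := Sym2.mem_iff_exists.mp hy₀
      exact hpath.2 (p.fst_mem_support_of_mem_edges hg₀)
    rw [Walk.edges_cons] at hg hg'
    rcases List.mem_cons.mp hg with rfl | h1
    · rcases List.mem_cons.mp hg' with rfl | h2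
      · rfl
      · exact (key h2 hy').elim
    · exact (key h1 hy).elim

lemma unique_sep {G : SimpleGraph (Fin n)} (hG : G.IsTree) {x y : Fin n}
    {g g' : Sym2 (Fin n)}
    (hgE : g ∈ G.edgeSet) (hgy : y ∈ g) (hgs : ¬ (G \ fromEdgeSet {g}).Reachable x y)
    (hgE' : g' ∈ G.edgeSet) (hgy' : y ∈ g') (hgs' : ¬ (G \ fromEdgeSet {g'}).Reachable x y) :
    g = g' := by
  obtain ⟨p, hp, -⟩ := hG.existsUnique_path x y
  have hmem : ∀ {h : Sym2 (Fin n)}, h ∈ G.edgeSet → ¬ (G \ fromEdgeSet {h}).Reachable x y →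
      h ∈ p.edges := by
    intro h hE hs
    by_contra hn
    refine hs ⟨p.transfer _ ?_⟩
    intro e' he'
    rw [edgeSet_sdiff, edgeSet_fromEdgeSet]
    refine ⟨p.edges_subset_edgeSet he', ?_⟩
    intro hx'
    rw [Set.mem_diff, Set.mem_singleton_iff] at hx'
    exact hn (hx'.1 ▸ he')
  have h1 : g ∈ p.reverse.edges := by
    rw [Walk.edges_reverse, List.mem_reverse]; exact hmem hgE hgs
  have h2 : g' ∈ p.reverse.edges := by
    rw [Walk.edges_reverse, List.mem_reverse]; exact hmem hgE' hgs'
  exact path_edge_at_head hp.reverse h1 hgy h2 hgy'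

lemma inj_core {x y v₁ v₂ : Fin n} {T₁ T₂ : Finset (Sym2 (Fin n))}
    (hT₁ : T₁ ∈ TS n) (hT₂ : T₂ ∈ TS n)
    (he₁ : s(x, y) ∈ T₁) (he₂ : s(x, y) ∈ T₂)
    (h₁ : (SimpleGraph.fromEdgeSet (↑(T₁.erase s(x, y)) : Set (Sym2 (Fin n)))).Reachable x v₁)
    (h₂ : (SimpleGraph.fromEdgeSet (↑(T₂.erase s(x, y)) : Set (Sym2 (Fin n)))).Reachable x v₂)
    (heq : insert s(v₁, y) (T₁.erase s(x, y)) = insert s(v₂, y) (T₂.erase s(x, y))) :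
    T₁ = T₂ ∧ v₁ = v₂ := by
  have hxy : x ≠ y := ne_of_mem_TS hT₁ he₁
  have hv₁y : v₁ ≠ y := reach_ne hT₁ he₁ h₁
  have hv₂y : v₂ ≠ y := reach_ne hT₂ he₂ h₂
  have hnm₁ : s(v₁, y) ∉ T₁.erase s(x, y) := newEdge_not_mem hT₁ he₁ h₁
  have hnm₂ : s(v₂, y) ∉ T₂.erase s(x, y) := newEdge_not_mem hT₂ he₂ h₂
  by_cases hc : v₁ = x
  · subst hc
    -- then e = f₁ ∈ LHS, so e ∈ RHS, forcing v₂ = x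
    have hmem : s(v₁, y) ∈ insert s(v₂, y) (T₂.erase s(v₁, y)) := by
      rw [← heq]; exact Finset.mem_insert_self _ _
    rcases Finset.mem_insert.mp hmem with hh | hh
    · -- s(v₁,y) = s(v₂,y) : v₂ = v₁
      have hv : v₂ = v₁ := by
        rcases Sym2.eq_iff.mp hh with ⟨h1, -⟩ | ⟨h1, h2⟩
        · exact h1.symm
        · exact absurd h2.symm hv₂y
      subst hv
      constructor
      · have e1 : insert s(v₂, y) (T₁.erase s(v₂, y)) = T₁ := Finset.insert_erase he₁
        have e2 : insert s(v₂, y) (T₂.erase s(v₂, y)) = T₂ := Finset.insert_erase he₂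
        rw [← e1, ← e2, heq]
      · rfl
    · exact absurd rfl (Finset.mem_erase.mp hh).1
  · -- v₁ ≠ x
    have hf₁e : s(v₁, y) ≠ s(x, y) := by
      intro hh
      rcases Sym2.eq_iff.mp hh with ⟨h1, -⟩ | ⟨-, h2⟩
      · exact hc h1
      · exact hxy h2.symm
    have henotin : s(x, y) ∉ insert s(v₁, y) (T₁.erase s(x, y)) := by
      intro hh
      rcases Finset.mem_insert.mp hh with hh' | hh'
      · exact hf₁e hh'.symm
      · exact (Finset.mem_erase.mp hh').1 rfl
    have hv₂x : v₂ ≠ x := by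
      rintro rfl
      rw [heq] at henotin
      exact henotin (Finset.mem_insert_self _ _)
    have hf₂e : s(v₂, y) ≠ s(x, y) := by
      intro hh
      rcases Sym2.eq_iff.mp hh with ⟨h1, -⟩ | ⟨-, h2⟩
      · exact hv₂x h1
      · exact hxy h2.symm
    -- T' is a tree
    have hT' : insert s(v₁, y) (T₁.erase s(x, y)) ∈ TS n := reconnect hT₁ he₁ h₁
    have htree' := (mem_TS.mp hT').2
    have herase₁ : (insert s(v₁, y) (T₁.erase s(x, y))).erase s(v₁, y) = T₁.erase s(x, y) :=
      Finset.erase_insert hnm₁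
    have herase₂ : (insert s(v₁, y) (T₁.erase s(x, y))).erase s(v₂, y) = T₂.erase s(x, y) := by
      rw [heq]; exact Finset.erase_insert hnm₂
    have hmem₁ : s(v₁, y) ∈ insert s(v₁, y) (T₁.erase s(x, y)) := Finset.mem_insert_self _ _
    have hmem₂ : s(v₂, y) ∈ insert s(v₁, y) (T₁.erase s(x, y)) := by
      rw [heq]; exact Finset.mem_insert_self _ _
    have hsep₁ : ¬ ((SimpleGraph.fromEdgeSet (↑(insert s(v₁, y) (T₁.erase s(x, y))) :
        Set (Sym2 (Fin n)))) \ fromEdgeSet {s(v₁, y)}).Reachable x y := by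
      intro hreach
      rw [← fromEdgeSet_erase, herase₁] at hreach
      exact not_reach hT₁ he₁ hreach
    have hsep₂ : ¬ ((SimpleGraph.fromEdgeSet (↑(insert s(v₁, y) (T₁.erase s(x, y))) :
        Set (Sym2 (Fin n)))) \ fromEdgeSet {s(v₂, y)}).Reachable x y := by
      intro hreach
      rw [← fromEdgeSet_erase, herase₂] at hreach
      exact not_reach hT₂ he₂ hreach
    have hgE₁ : s(v₁, y) ∈ (SimpleGraph.fromEdgeSet (↑(insert s(v₁, y) (T₁.erase s(x, y))) :
        Set (Sym2 (Fin n)))).edgeSet := by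
      rw [edgeSet_fromEdgeSet]
      exact ⟨Finset.mem_coe.mpr hmem₁, by rw [Sym2.mem_diagSet, Sym2.mk_isDiag_iff]; exact hv₁y⟩
    have hgE₂ : s(v₂, y) ∈ (SimpleGraph.fromEdgeSet (↑(insert s(v₁, y) (T₁.erase s(x, y))) :
        Set (Sym2 (Fin n)))).edgeSet := by
      rw [edgeSet_fromEdgeSet]
      exact ⟨Finset.mem_coe.mpr hmem₂, by rw [Sym2.mem_diagSet, Sym2.mk_isDiag_iff]; exact hv₂y⟩
    have hff : s(v₁, y) = s(v₂, y) := by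
      refine unique_sep htree' hgE₁ ?_ hsep₁ hgE₂ ?_ hsep₂
      · rw [Sym2.mem_iff]; right; rfl
      · rw [Sym2.mem_iff]; right; rfl
    have hv : v₁ = v₂ := by
      rcases Sym2.eq_iff.mp hff with ⟨h1, -⟩ | ⟨h1, h2⟩
      · exact h1
      · exact absurd h1 hv₁y
    refine ⟨?_, hv⟩
    have t1 : T₁ = insert s(x, y) ((insert s(v₁, y) (T₁.erase s(x, y))).erase s(v₁, y)) := by
      rw [herase₁, Finset.insert_erase he₁]
    have t2 : T₂ = insert s(x, y) ((insert s(v₁, y) (T₁.erase s(x, y))).erase s(v₂, y)) := by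
      rw [herase₂, Finset.insert_erase he₂]
    rw [t1, t2, hff]

/-! ### The switching bound -/

def pmin (e : Sym2 (Fin n)) : Fin n :=
  Sym2.lift ⟨fun a b => min a b, fun a b => min_comm a b⟩ e

def pmax (e : Sym2 (Fin n)) : Fin n :=
  Sym2.lift ⟨fun a b => max a b, fun a b => max_comm a b⟩ e

lemma pmin_pmax (e : Sym2 (Fin n)) : s(pmin e, pmax e) = e := by
  induction e with
  | _ a b =>
    simp only [pmin, pmax, Sym2.lift_mk]
    rcases le_total a b with h | h
    · rw [min_eq_left h, max_eq_right h]
    · rw [min_eq_right h, max_eq_left h, Sym2.eq_swap]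

noncomputable def Φ (T : Finset (Sym2 (Fin n))) (e : Sym2 (Fin n)) (v : Fin n) :
    Finset (Sym2 (Fin n)) × (Sym2 (Fin n) × Bool) :=
  if (SimpleGraph.fromEdgeSet (↑(T.erase e) : Set (Sym2 (Fin n)))).Reachable (pmin e) v
  then (insert s(v, pmax e) (T.erase e), (e, true))
  else (insert s(v, pmin e) (T.erase e), (e, false))

noncomputable def AF (n : ℕ) (U : Finset (Sym2 (Fin n))) (j : ℕ) :
    Finset (Finset (Sym2 (Fin n))) :=
  (TS n).filter (fun T => j ≤ (U ∩ T).card)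

noncomputable def DF (U : Finset (Sym2 (Fin n))) (j : ℕ) :
    Finset (Finset (Sym2 (Fin n)) × (Sym2 (Fin n) × Fin n)) :=
  (AF n U j).biUnion (fun T => {T} ×ˢ ((U ∩ T) ×ˢ univ))

lemma mem_DF {U : Finset (Sym2 (Fin n))} {j : ℕ}
    {z : Finset (Sym2 (Fin n)) × (Sym2 (Fin n) × Fin n)} :
    z ∈ DF U j ↔ z.1 ∈ AF n U j ∧ z.2.1 ∈ U ∩ z.1 := by
  simp only [DF, Finset.mem_biUnion, Finset.mem_product, Finset.mem_singleton, Finset.mem_univ,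
    and_true]
  constructor
  · rintro ⟨T, hT, rfl, h2⟩; exact ⟨hT, h2⟩
  · rintro ⟨h1, h2⟩; exact ⟨z.1, h1, rfl, h2⟩

lemma card_DF_lower (U : Finset (Sym2 (Fin n))) (j : ℕ) :
    (AF n U (j+1)).card * ((j+1) * n) ≤ (DF U (j+1)).card := by
  rw [DF, Finset.card_biUnion]
  · calc (AF n U (j+1)).card * ((j+1) * n) = ∑ _T ∈ AF n U (j+1), (j+1) * n := by
          rw [Finset.sum_const, smul_eq_mul]
    _ ≤ ∑ T ∈ AF n U (j+1), ({T} ×ˢ ((U ∩ T) ×ˢ univ)).card := by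
          refine Finset.sum_le_sum fun T hT => ?_
          rw [Finset.card_product, Finset.card_product, Finset.card_singleton, one_mul,
            Finset.card_univ, Fintype.card_fin]
          exact Nat.mul_le_mul_right n (Finset.mem_filter.mp hT).2
  · intro a ha b hb hab
    rw [Function.onFun, Finset.disjoint_left]
    intro z hza hzb
    rw [Finset.mem_product] at hza hzb
    rw [Finset.mem_singleton] at hza hzb
    exact hab (hza.1 ▸ hzb.1 ▸ rfl)

lemma Φ_maps {U : Finset (Sym2 (Fin n))} {j : ℕ}
    {z : Finset (Sym2 (Fin n)) × (Sym2 (Fin n) × Fin n)} (hz : z ∈ DF U (j+1)) :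
    Φ z.1 z.2.1 z.2.2 ∈ (AF n U j) ×ˢ (U ×ˢ (univ : Finset Bool)) := by
  obtain ⟨hT, he⟩ := mem_DF.mp hz
  obtain ⟨hTS, hcard⟩ := Finset.mem_filter.mp hT
  obtain ⟨heU, heT⟩ := Finset.mem_inter.mp he
  set T := z.1
  set e := z.2.1
  set v := z.2.2
  have hpp : s(pmin e, pmax e) = e := pmin_pmax e
  have hepm : s(pmin e, pmax e) ∈ T := by rw [hpp]; exact heT
  have hcard' : ∀ f : Sym2 (Fin n), ∀ W, W = insert f (T.erase e) →
      j ≤ (U ∩ W).card := by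
    rintro f W rfl
    have hsub : (U ∩ T).erase e ⊆ U ∩ insert f (T.erase e) := by
      intro g hg
      obtain ⟨hne, hgUT⟩ := Finset.mem_erase.mp hg
      obtain ⟨hgU, hgT⟩ := Finset.mem_inter.mp hgUT
      exact Finset.mem_inter.mpr ⟨hgU, Finset.mem_insert_of_mem (Finset.mem_erase.mpr ⟨hne, hgT⟩)⟩
    have h1 : j ≤ ((U ∩ T).erase e).card := by
      rw [Finset.card_erase_of_mem he]
      omega
    exact h1.trans (Finset.card_le_card hsub)
  rw [Φ]
  split_ifs with hreach
  · refine Finset.mem_product.mpr ⟨?_, Finset.mem_product.mpr ⟨heU, Finset.mem_univ _⟩⟩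
    refine Finset.mem_filter.mpr ⟨?_, hcard' _ _ rfl⟩
    have hv' : (SimpleGraph.fromEdgeSet (↑(T.erase s(pmin e, pmax e)) :
        Set (Sym2 (Fin n)))).Reachable (pmin e) v := by rw [hpp]; exact hreach
    have hres := reconnect hTS hepm hv'
    rwa [hpp] at hres
  · refine Finset.mem_product.mpr ⟨?_, Finset.mem_product.mpr ⟨heU, Finset.mem_univ _⟩⟩
    refine Finset.mem_filter.mpr ⟨?_, hcard' _ _ rfl⟩
    have hor := reach_or (x := pmin e) (y := pmax e) hTS hepm v
    rw [hpp] at hor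
    have hreach' : (SimpleGraph.fromEdgeSet (↑(T.erase e) : Set (Sym2 (Fin n)))).Reachable
        (pmax e) v := by
      rcases hor with h | h
      · exact absurd h hreach
      · exact h
    have hepm' : s(pmax e, pmin e) ∈ T := by rw [Sym2.eq_swap, hpp]; exact heT
    have hswap0 : True := trivial
    have hswap : s(pmax e, pmin e) = e := by rw [Sym2.eq_swap, hpp]
    have hv'' : (SimpleGraph.fromEdgeSet (↑(T.erase s(pmax e, pmin e)) :
        Set (Sym2 (Fin n)))).Reachable (pmax e) v := by rw [hswap]; exact hreach'
    have hres := reconnect hTS hepm' hv''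
    rwa [hswap] at hres

lemma Φ_inj (U : Finset (Sym2 (Fin n))) (j : ℕ) :
    Set.InjOn (fun z : Finset (Sym2 (Fin n)) × (Sym2 (Fin n) × Fin n) => Φ z.1 z.2.1 z.2.2)
      ↑(DF U (j+1)) := by
  rintro ⟨T, e, v⟩ hz ⟨T', e', v'⟩ hz' heq
  obtain ⟨hTf, heT⟩ := mem_DF.mp (Finset.mem_coe.mp hz)
  obtain ⟨hTf', heT'⟩ := mem_DF.mp (Finset.mem_coe.mp hz')
  obtain ⟨hTS, -⟩ := Finset.mem_filter.mp hTf
  obtain ⟨hTS', -⟩ := Finset.mem_filter.mp hTf'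
  have heTm : e ∈ T := (Finset.mem_inter.mp heT).2
  have heTm' : e' ∈ T' := (Finset.mem_inter.mp heT').2
  simp only [Φ] at heq
  split_ifs at heq with h1 h2 h2
  · -- both true
    have hE : e = e' := congrArg (fun p => p.2.1) heq
    subst hE
    have hins : insert s(v, pmax e) (T.erase e) = insert s(v', pmax e) (T'.erase e) :=
      congrArg Prod.fst heq
    set a := pmin e with ha
    set b := pmax e with hb
    have hpp : s(a, b) = e := pmin_pmax e
    rw [← hpp] at heTm heTm' h1 h2 hins
    obtain ⟨hTeq, hveq⟩ := inj_core hTS hTS' heTm heTm' h1 h2 hins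
    subst hveq
    have hTT : T = T' := hTeq
    subst hTT
    rfl
  · exact absurd (congrArg (fun p => p.2.2) heq) (by simp)
  · exact absurd (congrArg (fun p => p.2.2) heq) (by simp)
  · -- both false
    have hE : e = e' := congrArg (fun p => p.2.1) heq
    subst hE
    have hins : insert s(v, pmin e) (T.erase e) = insert s(v', pmin e) (T'.erase e) :=
      congrArg Prod.fst heq
    set a := pmin e with ha
    set b := pmax e with hb
    have hpp : s(a, b) = e := pmin_pmax e
    have hswap : s(b, a) = e := by rw [Sym2.eq_swap]; exact hpp
    rw [← hswap] at heTm heTm' hins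
    have hr : (SimpleGraph.fromEdgeSet (↑(T.erase s(b, a)) : Set (Sym2 (Fin n)))).Reachable b v := by
      rcases reach_or hTS heTm v with h | h
      · exact h
      · rw [hswap] at h
        exact absurd h h1
    have hr' : (SimpleGraph.fromEdgeSet (↑(T'.erase s(b, a)) : Set (Sym2 (Fin n)))).Reachable b v' := by
      rcases reach_or hTS' heTm' v' with h | h
      · exact h
      · rw [hswap] at h
        exact absurd h h2
    obtain ⟨hTeq, hveq⟩ := inj_core hTS hTS' heTm heTm' hr hr' hins
    subst hveq
    have hTT : T = T' := hTeq
    subst hTT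
    rfl

lemma switch (U : Finset (Sym2 (Fin n))) (j : ℕ) :
    (AF n U (j+1)).card * ((j+1) * n) ≤ (AF n U j).card * (2 * U.card) := by
  refine (card_DF_lower U j).trans ?_
  have h : (DF U (j+1)).card ≤ ((AF n U j) ×ˢ (U ×ˢ (univ : Finset Bool))).card :=
    Finset.card_le_card_of_injOn (fun z => Φ z.1 z.2.1 z.2.2) (fun z hz => Φ_maps hz) (Φ_inj U j)
  refine h.trans (le_of_eq ?_)
  rw [Finset.card_product, Finset.card_product, Finset.card_univ]
  simp only [Fintype.card_bool]
  ring

lemma AF_bound (U : Finset (Sym2 (Fin n))) (j : ℕ) :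
    (AF n U j).card * (j.factorial * n ^ j) ≤ (TS n).card * (2 * U.card) ^ j := by
  induction j with
  | zero =>
    rw [Nat.factorial_zero, pow_zero, pow_zero, mul_one, mul_one]
    rw [mul_one]
    unfold AF
    exact Finset.card_le_card (Finset.filter_subset (fun T => 0 ≤ (U ∩ T).card) (TS n))
  | succ j ih =>
    calc (AF n U (j+1)).card * ((j+1).factorial * n ^ (j+1))
        = ((AF n U (j+1)).card * ((j+1) * n)) * (j.factorial * n ^ j) := by
          rw [Nat.factorial_succ, pow_succ]; ring
      _ ≤ ((AF n U j).card * (2 * U.card)) * (j.factorial * n ^ j) :=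
          Nat.mul_le_mul_right _ (switch U j)
      _ = ((AF n U j).card * (j.factorial * n ^ j)) * (2 * U.card) := by ring
      _ ≤ ((TS n).card * (2 * U.card) ^ j) * (2 * U.card) := Nat.mul_le_mul_right _ ih
      _ = (TS n).card * (2 * U.card) ^ (j+1) := by rw [pow_succ]; ring

lemma EF_bound (U : Finset (Sym2 (Fin n))) (c : ℕ) :
    ((TS n).filter (fun T => (U ∩ T).card = c)).card * (c.factorial * n ^ c) ≤
      (TS n).card * (2 * U.card) ^ c := by
  refine le_trans (Nat.mul_le_mul_right _ (Finset.card_le_card ?_)) (AF_bound U c)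
  intro T hT
  obtain ⟨hh1, hh2⟩ := Finset.mem_filter.mp hT
  exact Finset.mem_filter.mpr ⟨hh1, le_of_eq hh2.symm⟩

/-! ### Tuples of trees -/

def Filt (k m : ℕ) : Finset (Fin k) := univ.filter (fun j => (j : ℕ) < m)

lemma mem_Filt {k m : ℕ} {j : Fin k} : j ∈ Filt k m ↔ (j : ℕ) < m := by
  simp [Filt]

lemma Filt_succ {k m : ℕ} (hm : m < k) : Filt k (m+1) = insert ⟨m, hm⟩ (Filt k m) := by
  ext j
  simp only [mem_Filt, Finset.mem_insert, Fin.ext_iff]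
  omega

lemma not_mem_Filt {k m : ℕ} (hm : m < k) : (⟨m, hm⟩ : Fin k) ∉ Filt k m := by
  simp [mem_Filt]

lemma Filt_succ_ge {k m : ℕ} (hm : ¬ m < k) : Filt k (m+1) = Filt k m := by
  ext j
  have := j.isLt
  simp only [mem_Filt]
  omega

lemma Filt_univ {k : ℕ} : Filt k k = univ := by
  ext j
  simp [mem_Filt, j.isLt]

lemma card_Filt_le {k m : ℕ} : (Filt k m).card ≤ m := by
  have h : (Filt k m).card ≤ (Finset.range m).card :=
    Finset.card_le_card_of_injOn (fun j : Fin k => (j : ℕ))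
      (fun j hj => Finset.mem_range.mpr (mem_Filt.mp hj))
      (fun a _ b _ h => Fin.ext h)
  simpa using h

noncomputable def PU (t : Fin k → Finset (Sym2 (Fin n))) (m : ℕ) : Finset (Sym2 (Fin n)) :=
  (Filt k m).biUnion t

lemma PU_congr {k : ℕ} {t r : Fin k → Finset (Sym2 (Fin n))} {m : ℕ}
    (h : ∀ j : Fin k, (j : ℕ) < m → t j = r j) : PU t m = PU r m :=
  Finset.biUnion_congr rfl fun j hj => h j (mem_Filt.mp hj)

lemma PU_card_le {k : ℕ} {t : Fin k → Finset (Sym2 (Fin n))} {m : ℕ}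
    (h : ∀ j : Fin k, (j : ℕ) < m → (t j).card = n - 1) :
    (PU t m).card ≤ m * (n - 1) := by
  refine Finset.card_biUnion_le.trans ?_
  calc ∑ j ∈ Filt k m, (t j).card = ∑ j ∈ Filt k m, (n - 1) :=
        Finset.sum_congr rfl fun j hj => h j (mem_Filt.mp hj)
    _ = (Filt k m).card * (n - 1) := by rw [Finset.sum_const, smul_eq_mul]
    _ ≤ m * (n - 1) := Nat.mul_le_mul_right _ card_Filt_le

noncomputable def SS (n k : ℕ) (f : Fin k → ℕ) (m : ℕ) :
    Finset (Fin k → Finset (Sym2 (Fin n))) :=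
  univ.filter (fun t => (∀ i, t i ∈ TS n) ∧
    ∀ j : Fin k, (j : ℕ) < m → ((PU t (j : ℕ)) ∩ t j).card = f j)

lemma mem_SS {k : ℕ} {f : Fin k → ℕ} {m : ℕ} {t : Fin k → Finset (Sym2 (Fin n))} :
    t ∈ SS n k f m ↔ (∀ i, t i ∈ TS n) ∧
      ∀ j : Fin k, (j : ℕ) < m → ((PU t (j : ℕ)) ∩ t j).card = f j := by
  rw [SS, Finset.mem_filter]
  simp

lemma SS_zero {k : ℕ} (f : Fin k → ℕ) : (SS n k f 0).card ≤ (TS n).card ^ k := by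
  have hsub : SS n k f 0 ⊆ Fintype.piFinset (fun _ : Fin k => TS n) := fun t ht =>
    Fintype.mem_piFinset.mpr ((mem_SS.mp ht).1)
  refine (Finset.card_le_card hsub).trans (le_of_eq ?_)
  rw [Fintype.card_piFinset]
  rw [Finset.prod_const, Finset.card_univ, Fintype.card_fin]

lemma union_card {k : ℕ} (t : Fin k → Finset (Sym2 (Fin n))) (m : ℕ) :
    (PU t m).card + ∑ j ∈ Filt k m, ((PU t (j : ℕ)) ∩ t j).card =
      ∑ j ∈ Filt k m, (t j).card := by
  induction m with
  | zero =>
    have h0 : Filt k 0 = ∅ := by ext j; simp [mem_Filt]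
    simp [PU, h0]
  | succ m ih =>
    by_cases hm : m < k
    · have hins := Filt_succ hm
      have hni := not_mem_Filt hm
      have hPU : PU t (m+1) = t ⟨m, hm⟩ ∪ PU t m := by
        rw [PU, hins, Finset.biUnion_insert]; rfl
      have hkey := Finset.card_union_add_card_inter (t ⟨m, hm⟩) (PU t m)
      rw [hins, Finset.sum_insert hni, Finset.sum_insert hni, hPU]
      have hval : ((⟨m, hm⟩ : Fin k) : ℕ) = m := rfl
      rw [hval]
      rw [Finset.inter_comm (PU t m) (t ⟨m, hm⟩)] 
      omega
    · rw [Filt_succ_ge hm] at *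
      have hPU : PU t (m+1) = PU t m := by rw [PU, Filt_succ_ge hm]; rfl
      rw [hPU]
      exact ih

lemma SS_step {k : ℕ} (f : Fin k → ℕ) {m : ℕ} (hm : m < k) :
    (SS n k f (m+1)).card * ((f ⟨m, hm⟩).factorial * n ^ (f ⟨m, hm⟩)) ≤
      (SS n k f m).card * (2 * (m * (n - 1))) ^ (f ⟨m, hm⟩) := by
  classical
  have h1 : (SS n k f (m+1)).card =
      ∑ r ∈ (SS n k f (m+1)).image (fun t => Function.update t ⟨m, hm⟩ ∅),
        ((SS n k f (m+1)).filter (fun t => Function.update t ⟨m, hm⟩ ∅ = r)).card :=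
    Finset.card_eq_sum_card_fiberwise (fun t ht => Finset.mem_image_of_mem _ ht)
  have h2 : ∀ r ∈ (SS n k f (m+1)).image (fun t => Function.update t ⟨m, hm⟩ ∅),
      ((SS n k f (m+1)).filter (fun t => Function.update t ⟨m, hm⟩ ∅ = r)).card *
        ((f ⟨m, hm⟩).factorial * n ^ (f ⟨m, hm⟩)) ≤
      (TS n).card * (2 * (m * (n - 1))) ^ (f ⟨m, hm⟩) := by
    intro r hr
    obtain ⟨t0, ht0, hrt0⟩ := Finset.mem_image.mp hr
    obtain ⟨ht0tree, ht0X⟩ := mem_SS.mp ht0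
    have hrj : ∀ j : Fin k, j ≠ ⟨m, hm⟩ → r j = t0 j := by
      intro j hj
      rw [← hrt0]
      exact Function.update_of_ne hj _ _
    have hPUr : ∀ t : Fin k → Finset (Sym2 (Fin n)),
        Function.update t ⟨m, hm⟩ ∅ = r → PU r m = PU t m := by
      intro t ht
      refine PU_congr fun j hj => ?_
      have hji : j ≠ ⟨m, hm⟩ := by
        intro hh
        rw [hh] at hj
        exact lt_irrefl m hj
      rw [← ht]
      exact Function.update_of_ne hji _ _
    have hfib : ((SS n k f (m+1)).filter (fun t => Function.update t ⟨m, hm⟩ ∅ = r)).card ≤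
        ((TS n).filter (fun T => ((PU r m) ∩ T).card = f ⟨m, hm⟩)).card := by
      refine Finset.card_le_card_of_injOn (fun t => t ⟨m, hm⟩) ?_ ?_
      · intro t ht
        obtain ⟨htS, hft⟩ := Finset.mem_filter.mp ht
        obtain ⟨htree, hX⟩ := mem_SS.mp htS
        refine Finset.mem_filter.mpr ⟨htree _, ?_⟩
        rw [hPUr t hft]
        exact hX ⟨m, hm⟩ (Nat.lt_succ_self m)
      · intro t1 ht1 t2 ht2 hval
        have hf1 : Function.update t1 ⟨m, hm⟩ ∅ = r := (Finset.mem_filter.mp ht1).2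
        have hf2 : Function.update t2 ⟨m, hm⟩ ∅ = r := (Finset.mem_filter.mp ht2).2
        funext j
        by_cases hj : j = (⟨m, hm⟩ : Fin k)
        · rw [hj]; exact hval
        · have e1 : t1 j = r j := by
            rw [← hf1]; exact (Function.update_of_ne hj _ _).symm
          have e2 : t2 j = r j := by
            rw [← hf2]; exact (Function.update_of_ne hj _ _).symm
          rw [e1, e2]
    have hU : (PU r m).card ≤ m * (n - 1) := by
      refine PU_card_le fun j hj => ?_
      have hji : j ≠ ⟨m, hm⟩ := by
        intro hh
        rw [hh] at hj
        exact lt_irrefl m hj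
      rw [hrj j hji]
      exact card_TS (ht0tree j)
    calc ((SS n k f (m+1)).filter (fun t => Function.update t ⟨m, hm⟩ ∅ = r)).card *
          ((f ⟨m, hm⟩).factorial * n ^ (f ⟨m, hm⟩))
        ≤ ((TS n).filter (fun T => ((PU r m) ∩ T).card = f ⟨m, hm⟩)).card *
          ((f ⟨m, hm⟩).factorial * n ^ (f ⟨m, hm⟩)) := Nat.mul_le_mul_right _ hfib
      _ ≤ (TS n).card * (2 * (PU r m).card) ^ (f ⟨m, hm⟩) := EF_bound _ _
      _ ≤ (TS n).card * (2 * (m * (n - 1))) ^ (f ⟨m, hm⟩) := by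
          refine Nat.mul_le_mul_left _ (Nat.pow_le_pow_left ?_ _)
          omega
  have h4 : (SS n k f (m+1)).card * ((f ⟨m, hm⟩).factorial * n ^ (f ⟨m, hm⟩)) ≤
      ((SS n k f (m+1)).image (fun t => Function.update t ⟨m, hm⟩ ∅)).card *
        ((TS n).card * (2 * (m * (n - 1))) ^ (f ⟨m, hm⟩)) := by
    rw [h1, Finset.sum_mul]
    refine (Finset.sum_le_sum h2).trans (le_of_eq ?_)
    rw [Finset.sum_const, smul_eq_mul]
  have h5 : ((SS n k f (m+1)).image (fun t => Function.update t ⟨m, hm⟩ ∅)).card *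
      (TS n).card ≤ (SS n k f m).card := by
    have hinj : (((SS n k f (m+1)).image (fun t => Function.update t ⟨m, hm⟩ ∅)) ×ˢ TS n).card ≤
        (SS n k f m).card := by
      refine Finset.card_le_card_of_injOn (fun z => Function.update z.1 ⟨m, hm⟩ z.2) ?_ ?_
      · rintro ⟨r, T⟩ hz
        obtain ⟨hrI, hTT⟩ := Finset.mem_product.mp hz
        obtain ⟨t0, ht0, hrt0⟩ := Finset.mem_image.mp hrI
        obtain ⟨htree0, hX0⟩ := mem_SS.mp ht0
        have hrt0' : Function.update t0 ⟨m, hm⟩ ∅ = r := hrt0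
        have hTT' : T ∈ TS n := hTT
        have hrj : ∀ j : Fin k, j ≠ ⟨m, hm⟩ → r j = t0 j := by
          intro j hj
          rw [← hrt0']
          exact Function.update_of_ne hj _ _
        show Function.update r ⟨m, hm⟩ T ∈ SS n k f m
        refine mem_SS.mpr ⟨?_, ?_⟩
        · intro i'
          by_cases hi' : i' = (⟨m, hm⟩ : Fin k)
          · rw [hi', Function.update_self]; exact hTT'
          · rw [Function.update_of_ne hi', hrj i' hi']
            exact htree0 i'
        · intro j hj
          have hji : j ≠ ⟨m, hm⟩ := by
            intro hh
            rw [hh] at hj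
            exact lt_irrefl m hj
          have hagree : ∀ j' : Fin k, (j' : ℕ) < (j : ℕ) →
              Function.update r ⟨m, hm⟩ T j' = t0 j' := by
            intro j' hj'
            have hji' : j' ≠ ⟨m, hm⟩ := by
              intro hh
              rw [hh] at hj'
              have hval : ((⟨m, hm⟩ : Fin k) : ℕ) = m := rfl
              rw [hval] at hj'
              have : (j : ℕ) < m := hj
              omega
            rw [Function.update_of_ne hji', hrj j' hji']
          have hP : PU (Function.update r ⟨m, hm⟩ T) (j : ℕ) = PU t0 (j : ℕ) :=
            PU_congr hagree
          rw [hP, Function.update_of_ne hji, hrj j hji]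
          exact hX0 j (Nat.lt_succ_of_lt hj)
      · rintro ⟨r1, T1⟩ hz1 ⟨r2, T2⟩ hz2 hupd
        have hz1' := Finset.mem_product.mp (Finset.mem_coe.mp hz1)
        have hz2' := Finset.mem_product.mp (Finset.mem_coe.mp hz2)
        obtain ⟨t1, -, hrt1⟩ := Finset.mem_image.mp hz1'.1
        obtain ⟨t2, -, hrt2⟩ := Finset.mem_image.mp hz2'.1
        have hrt1' : Function.update t1 ⟨m, hm⟩ ∅ = r1 := hrt1
        have hrt2' : Function.update t2 ⟨m, hm⟩ ∅ = r2 := hrt2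
        have hupd' : Function.update r1 ⟨m, hm⟩ T1 = Function.update r2 ⟨m, hm⟩ T2 := hupd
        have hT : T1 = T2 := by
          have := congrFun hupd' ⟨m, hm⟩
          rwa [Function.update_self, Function.update_self] at this
        have hr : r1 = r2 := by
          funext j
          by_cases hj : j = (⟨m, hm⟩ : Fin k)
          · have e1 : r1 j = ∅ := by rw [hj, ← hrt1', Function.update_self]
            have e2 : r2 j = ∅ := by rw [hj, ← hrt2', Function.update_self]
            rw [e1, e2]
          · have := congrFun hupd' j
            rwa [Function.update_of_ne hj, Function.update_of_ne hj] at this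
        have : r1 = r2 ∧ T1 = T2 := ⟨hr, hT⟩
        rw [Prod.mk.injEq]
        exact this
    calc ((SS n k f (m+1)).image (fun t => Function.update t ⟨m, hm⟩ ∅)).card * (TS n).card
        = (((SS n k f (m+1)).image (fun t => Function.update t ⟨m, hm⟩ ∅)) ×ˢ TS n).card :=
          (Finset.card_product _ _).symm
      _ ≤ (SS n k f m).card := hinj
  calc (SS n k f (m+1)).card * ((f ⟨m, hm⟩).factorial * n ^ (f ⟨m, hm⟩))
      ≤ ((SS n k f (m+1)).image (fun t => Function.update t ⟨m, hm⟩ ∅)).card *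
        ((TS n).card * (2 * (m * (n - 1))) ^ (f ⟨m, hm⟩)) := h4
    _ = (((SS n k f (m+1)).image (fun t => Function.update t ⟨m, hm⟩ ∅)).card *
        (TS n).card) * (2 * (m * (n - 1))) ^ (f ⟨m, hm⟩) := by ring
    _ ≤ (SS n k f m).card * (2 * (m * (n - 1))) ^ (f ⟨m, hm⟩) :=
        Nat.mul_le_mul_right _ h5

lemma SS_chain {k : ℕ} (f : Fin k → ℕ) : ∀ m, m ≤ k →
    (SS n k f m).card * ((∏ j ∈ Filt k m, (f j).factorial) * n ^ (∑ j ∈ Filt k m, f j)) ≤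
      (TS n).card ^ k * ∏ j ∈ Filt k m, (2 * ((j : ℕ) * (n - 1))) ^ f j := by
  intro m
  induction m with
  | zero =>
    intro _
    have h0 : Filt k 0 = ∅ := by ext j; simp [mem_Filt]
    rw [h0]
    simp only [Finset.prod_empty, Finset.sum_empty, pow_zero, mul_one]
    exact SS_zero f
  | succ m ih =>
    intro hmk
    have hm : m < k := hmk
    have IH := ih (Nat.le_of_lt hm)
    have hstep := SS_step (n := n) f hm
    have hins := Filt_succ hm
    have hni := not_mem_Filt hm
    rw [hins, Finset.prod_insert hni, Finset.prod_insert hni, Finset.sum_insert hni, pow_add]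
    have hval : ((⟨m, hm⟩ : Fin k) : ℕ) = m := rfl
    rw [hval]
    calc (SS n k f (m+1)).card *
          (((f ⟨m, hm⟩).factorial * ∏ j ∈ Filt k m, (f j).factorial) *
            (n ^ (f ⟨m, hm⟩) * n ^ (∑ j ∈ Filt k m, f j)))
        = ((SS n k f (m+1)).card * ((f ⟨m, hm⟩).factorial * n ^ (f ⟨m, hm⟩))) *
          ((∏ j ∈ Filt k m, (f j).factorial) * n ^ (∑ j ∈ Filt k m, f j)) := by ring
      _ ≤ ((SS n k f m).card * (2 * (m * (n - 1))) ^ (f ⟨m, hm⟩)) *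
          ((∏ j ∈ Filt k m, (f j).factorial) * n ^ (∑ j ∈ Filt k m, f j)) :=
          Nat.mul_le_mul_right _ hstep
      _ = ((SS n k f m).card * ((∏ j ∈ Filt k m, (f j).factorial) *
            n ^ (∑ j ∈ Filt k m, f j))) * (2 * (m * (n - 1))) ^ (f ⟨m, hm⟩) := by ring
      _ ≤ ((TS n).card ^ k * ∏ j ∈ Filt k m, (2 * ((j : ℕ) * (n - 1))) ^ f j) *
            (2 * (m * (n - 1))) ^ (f ⟨m, hm⟩) := Nat.mul_le_mul_right _ IH
      _ = (TS n).card ^ k * ((2 * (m * (n - 1))) ^ (f ⟨m, hm⟩) *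
            ∏ j ∈ Filt k m, (2 * ((j : ℕ) * (n - 1))) ^ f j) := by ring

noncomputable def MS (n k a : ℕ) : Finset (Fin k → Finset (Sym2 (Fin n))) :=
  univ.filter (fun t => (∀ i, t i ∈ TS n) ∧ k * (n - 1) = (univ.biUnion t).card + a)

lemma mem_MS {k a : ℕ} {t : Fin k → Finset (Sym2 (Fin n))} :
    t ∈ MS n k a ↔ (∀ i, t i ∈ TS n) ∧ k * (n - 1) = (univ.biUnion t).card + a := by
  rw [MS, Finset.mem_filter]
  simp

lemma MS_subset {k a : ℕ} :
    MS n k a ⊆ (Finset.piAntidiag (univ : Finset (Fin k)) a).biUnion (fun f => SS n k f k) := by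
  intro t ht
  obtain ⟨htree, heq⟩ := mem_MS.mp ht
  have hPUk : PU t k = univ.biUnion t := by rw [PU, Filt_univ]
  have h1 := union_card t k
  have h2 : ∑ j ∈ Filt k k, (t j).card = k * (n - 1) := by
    rw [Filt_univ]
    calc ∑ j : Fin k, (t j).card = ∑ _j : Fin k, (n - 1) :=
        Finset.sum_congr rfl fun j _ => card_TS (htree j)
      _ = k * (n - 1) := by rw [Finset.sum_const, smul_eq_mul, Finset.card_univ, Fintype.card_fin]
  have hsum : ∑ j ∈ Filt k k, ((PU t (j : ℕ)) ∩ t j).card = a := by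
    rw [hPUk] at h1
    omega
  refine Finset.mem_biUnion.mpr ⟨fun j => ((PU t (j : ℕ)) ∩ t j).card, ?_, ?_⟩
  · rw [Finset.mem_piAntidiag]
    refine ⟨?_, fun i _ => Finset.mem_univ i⟩
    rw [← Filt_univ]
    exact hsum
  · exact mem_SS.mpr ⟨htree, fun j hj => rfl⟩

lemma grand (n k a : ℕ) :
    (MS n k a).card * (a.factorial * n ^ a) ≤
      (TS n).card ^ k * ((k * (k - 1)) ^ a * (n - 1) ^ a) := by
  classical
  have hper : ∀ f ∈ Finset.piAntidiag (univ : Finset (Fin k)) a,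
      (SS n k f k).card * (a.factorial * n ^ a) ≤
        (TS n).card ^ k * (Nat.multinomial univ f * ∏ j : Fin k, (2 * (j : ℕ)) ^ f j)
          * (n - 1) ^ a := by
    intro f hf
    obtain ⟨hsum, -⟩ := Finset.mem_piAntidiag.mp hf
    have hchain := SS_chain (n := n) f k le_rfl
    rw [Filt_univ] at hchain
    have hprod : ∏ j : Fin k, (2 * ((j : ℕ) * (n - 1))) ^ f j =
        (∏ j : Fin k, (2 * (j : ℕ)) ^ f j) * (n - 1) ^ a := by
      calc ∏ j : Fin k, (2 * ((j : ℕ) * (n - 1))) ^ f j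
          = ∏ j : Fin k, ((2 * (j : ℕ)) ^ f j * (n - 1) ^ f j) := by
            refine Finset.prod_congr rfl fun j _ => ?_
            rw [← mul_pow, mul_assoc]
        _ = (∏ j : Fin k, (2 * (j : ℕ)) ^ f j) * ∏ j : Fin k, (n - 1) ^ f j :=
            Finset.prod_mul_distrib
        _ = (∏ j : Fin k, (2 * (j : ℕ)) ^ f j) * (n - 1) ^ a := by
            rw [Finset.prod_pow_eq_pow_sum, hsum]
    rw [hprod] at hchain
    have hmul := Nat.mul_le_mul_right (Nat.multinomial univ f) hchain
    have hfact : (∏ j : Fin k, (f j).factorial) * Nat.multinomial univ f = a.factorial := by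
      have hspec := Nat.multinomial_spec (univ : Finset (Fin k)) f
      rw [hsum] at hspec
      exact hspec
    calc (SS n k f k).card * (a.factorial * n ^ a)
        = ((SS n k f k).card * ((∏ j : Fin k, (f j).factorial) * n ^ (∑ j : Fin k, f j))) *
            Nat.multinomial univ f := by rw [hsum, ← hfact]; ring
      _ ≤ ((TS n).card ^ k * ((∏ j : Fin k, (2 * (j : ℕ)) ^ f j) * (n - 1) ^ a)) *
            Nat.multinomial univ f := hmul
      _ = (TS n).card ^ k * (Nat.multinomial univ f * ∏ j : Fin k, (2 * (j : ℕ)) ^ f j)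
            * (n - 1) ^ a := by ring
  have hcard : (MS n k a).card ≤ ∑ f ∈ Finset.piAntidiag (univ : Finset (Fin k)) a,
      (SS n k f k).card :=
    (Finset.card_le_card MS_subset).trans Finset.card_biUnion_le
  have hgauss : ∑ j : Fin k, 2 * (j : ℕ) = k * (k - 1) := by
    have h1 : ∑ j : Fin k, (j : ℕ) = ∑ i ∈ Finset.range k, i :=
      Fin.sum_univ_eq_sum_range (fun i => i) k
    calc ∑ j : Fin k, 2 * (j : ℕ) = 2 * ∑ j : Fin k, (j : ℕ) := by rw [Finset.mul_sum]
      _ = (∑ i ∈ Finset.range k, i) * 2 := by rw [h1]; ring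
      _ = k * (k - 1) := Finset.sum_range_id_mul_two k
  have hbinom : ∑ f ∈ Finset.piAntidiag (univ : Finset (Fin k)) a,
      (Nat.multinomial univ f * ∏ j : Fin k, (2 * (j : ℕ)) ^ f j) = (k * (k - 1)) ^ a := by
    have hthm := Finset.sum_pow_eq_sum_piAntidiag (univ : Finset (Fin k))
      (fun j => 2 * (j : ℕ)) a
    rw [hgauss] at hthm
    simpa using hthm.symm
  calc (MS n k a).card * (a.factorial * n ^ a)
      ≤ (∑ f ∈ Finset.piAntidiag (univ : Finset (Fin k)) a, (SS n k f k).card) *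
          (a.factorial * n ^ a) := Nat.mul_le_mul_right _ hcard
    _ = ∑ f ∈ Finset.piAntidiag (univ : Finset (Fin k)) a,
          (SS n k f k).card * (a.factorial * n ^ a) := Finset.sum_mul _ _ _
    _ ≤ ∑ f ∈ Finset.piAntidiag (univ : Finset (Fin k)) a,
          (TS n).card ^ k * (Nat.multinomial univ f * ∏ j : Fin k, (2 * (j : ℕ)) ^ f j)
            * (n - 1) ^ a := Finset.sum_le_sum hper
    _ = (TS n).card ^ k * (∑ f ∈ Finset.piAntidiag (univ : Finset (Fin k)) a,
          (Nat.multinomial univ f * ∏ j : Fin k, (2 * (j : ℕ)) ^ f j)) * (n - 1) ^ a := by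
        rw [Finset.mul_sum, Finset.sum_mul]
    _ = (TS n).card ^ k * ((k * (k - 1)) ^ a * (n - 1) ^ a) := by rw [hbinom]; ring

lemma MS_card_k0 (n a : ℕ) : (MS n 0 a).card = if a = 0 then 1 else 0 := by
  classical
  split_ifs with ha
  · subst ha
    rw [MS]
    have hall : ∀ t : Fin 0 → Finset (Sym2 (Fin n)),
        (∀ i, t i ∈ TS n) ∧ 0 * (n - 1) = ((univ : Finset (Fin 0)).biUnion t).card + 0 := by
      intro t
      constructor
      · intro i; exact i.elim0
      · simp
    rw [Finset.filter_true_of_mem (fun t _ => hall t)]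
    simp
  · rw [MS]
    rw [Finset.card_eq_zero, Finset.filter_eq_empty_iff]
    rintro t - ⟨-, heq⟩
    simp only [Finset.univ_eq_empty, Finset.biUnion_empty, Finset.card_empty, Nat.zero_mul,
      zero_add] at heq
    exact ha heq.symm

lemma main_nat (n k a : ℕ) (hn : 1 ≤ n) :
    (MS n k a).card * a.factorial ≤ (TS n).card ^ k * (k * (k - 1)) ^ a := by
  have h := grand n k a
  have h2 : (TS n).card ^ k * ((k * (k - 1)) ^ a * (n - 1) ^ a) ≤
      ((TS n).card ^ k * (k * (k - 1)) ^ a) * n ^ a := by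
    calc (TS n).card ^ k * ((k * (k - 1)) ^ a * (n - 1) ^ a)
        = ((TS n).card ^ k * (k * (k - 1)) ^ a) * (n - 1) ^ a := by ring
      _ ≤ ((TS n).card ^ k * (k * (k - 1)) ^ a) * n ^ a :=
        Nat.mul_le_mul_left _ (Nat.pow_le_pow_left (by omega) a)
  have h3 : ((MS n k a).card * a.factorial) * n ^ a ≤
      ((TS n).card ^ k * (k * (k - 1)) ^ a) * n ^ a := by
    calc ((MS n k a).card * a.factorial) * n ^ a
        = (MS n k a).card * (a.factorial * n ^ a) := by ring
      _ ≤ (TS n).card ^ k * ((k * (k - 1)) ^ a * (n - 1) ^ a) := h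
      _ ≤ ((TS n).card ^ k * (k * (k - 1)) ^ a) * n ^ a := h2
  exact Nat.le_of_mul_le_mul_right h3 (pow_pos hn a)

end TreeDef


/-- Claim 1 of the paper. Let `k = O(n^α)` with `0 < α < 1/11` fixed, and
let `T₁,…,T_k` be independent uniformly random spanning trees of `K_n`. With
`M_n = k(n-1) - |T₁ ∪ ⋯ ∪ T_k|`, for every integer `a ≥ 0` we have
`P[M_n = a] ≤ (k(k-1))^a / a!`. -/
theorem tree_union_deficiency_upper_bound (α : ℝ) (hα : 0 < α) (hα' : α < 1 / 11)
    (B : ℝ) (hB : 0 < B) (k : ℕ → ℕ) (hk : ∀ n : ℕ, (k n : ℝ) ≤ B * (n : ℝ) ^ α)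
    (n a : ℕ) :
    (treeTupleCount n (k n) a : ℝ) /
        (((spanningTrees (⊤ : SimpleGraph (Fin n))).ncard : ℝ) ^ (k n)) ≤
      ((k n * (k n - 1) : ℕ) : ℝ) ^ a / (Nat.factorial a) := by
  classical
  have hset : {t : Fin (k n) → Finset (Sym2 (Fin n)) |
      (∀ i, t i ∈ spanningTrees (⊤ : SimpleGraph (Fin n))) ∧
      (k n) * (n - 1) = (Finset.univ.biUnion t).card + a} = ↑(TreeDef.MS n (k n) a) := by
    ext t
    simp only [Set.mem_setOf_eq, Finset.mem_coe]
    rw [TreeDef.mem_MS]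
    constructor
    · rintro ⟨h1, h2⟩; exact ⟨fun i => TreeDef.mem_TS'.mpr (h1 i), h2⟩
    · rintro ⟨h1, h2⟩; exact ⟨fun i => TreeDef.mem_TS'.mp (h1 i), h2⟩
  have hcount : treeTupleCount n (k n) a = (TreeDef.MS n (k n) a).card := by
    rw [treeTupleCount, hset, Set.ncard_coe_finset]
  have hN : (spanningTrees (⊤ : SimpleGraph (Fin n))).ncard = (TreeDef.TS n).card := by
    rw [← Set.ncard_coe_finset (TreeDef.TS n)]
    congr 1
    exact (Set.Finite.coe_toFinset _).symm
  rw [hcount, hN]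
  by_cases hk0 : k n = 0
  · rw [hk0]
    rw [TreeDef.MS_card_k0]
    rw [pow_zero, div_one]
    by_cases ha : a = 0
    · subst ha
      norm_num
    · rw [if_neg ha]
      have hb : ((0 * (0 - 1) : ℕ) : ℝ) = 0 := by norm_num
      rw [hb, zero_pow ha]
      norm_num
  · have hn : 1 ≤ n := by
      by_contra hn'
      have hn0 : n = 0 := by omega
      have hzero := hk n
      rw [hn0] at hzero hk0
      rw [Nat.cast_zero, Real.zero_rpow (ne_of_gt hα), mul_zero] at hzero
      have : k 0 = 0 := by exact_mod_cast le_antisymm hzero (by positivity)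
      exact hk0 this
    rcases Nat.eq_zero_or_pos (TreeDef.TS n).card with hN0 | hNpos
    · rw [hN0]
      rw [Nat.cast_zero, zero_pow hk0, div_zero]
      positivity
    · have hnat := TreeDef.main_nat n (k n) a hn
      have hTSpos : (0 : ℝ) < ((TreeDef.TS n).card : ℝ) := by exact_mod_cast hNpos
      have hfacpos : (0 : ℝ) < ((Nat.factorial a : ℕ) : ℝ) := by
        exact_mod_cast Nat.factorial_pos a
      rw [div_le_div_iff₀ (by positivity) hfacpos]
      have hcast : ((TreeDef.MS n (k n) a).card : ℝ) * ((Nat.factorial a : ℕ) : ℝ) ≤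
          ((TreeDef.TS n).card : ℝ) ^ (k n) * ((k n * (k n - 1) : ℕ) : ℝ) ^ a := by
        exact_mod_cast hnat
      calc ((TreeDef.MS n (k n) a).card : ℝ) * ((Nat.factorial a : ℕ) : ℝ)
          ≤ ((TreeDef.TS n).card : ℝ) ^ (k n) * ((k n * (k n - 1) : ℕ) : ℝ) ^ a := hcast
        _ = ((k n * (k n - 1) : ℕ) : ℝ) ^ a * ((TreeDef.TS n).card : ℝ) ^ (k n) :=
            mul_comm _ _
end
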